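/- arXiv:1307.5043 — 7 statements merged into one kernel-verified Lean document; each statement's English description precedes it below -/
import Mathlib

section
/- Weighted matrix-tree theorem for rooted forests: for every subset R ⊆ V, the determinant of the submatrix of the weighted Laplacian L obtained by deleting the rows and columns indexed by R equals the sum, over all spanning forests F rooted at R, of the products ∏_{i ∈ V\R} w i (F i). -/
open scoped Classical

section Aux

variable {V : Type*} [Fintype V] [DecidableEq V]

/-- Extend a function on `V \ R` to all of `V` by the identity on `R`. -/
noncomputable def extFun (R : Finset V) (f : {x : V // x ∉ R} → V) : V → V :=
  fun x => if hx : x ∉ R then f ⟨x, hx⟩ else x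

lemma extFun_apply (R : Finset V) (f : {x : V // x ∉ R} → V) (i : {x : V // x ∉ R}) :
    extFun R f (i : V) = f i := by
  simp [extFun, i.2]

lemma extFun_apply_mem (R : Finset V) (f : {x : V // x ∉ R} → V) {x : V} (hx : x ∈ R) :
    extFun R f x = x := by
  simp [extFun, hx]

/-- The incidence-type matrix attached to a function `f` on `V \ R`. -/
noncomputable def Dmat (R : Finset V) (f : {x : V // x ∉ R} → V) :
    Matrix {x : V // x ∉ R} {x : V // x ∉ R} ℂ :=
  Matrix.of fun i j =>
    (if (j : V) = (i : V) then (1 : ℂ) else 0) - (if (j : V) = f i then (1 : ℂ) else 0)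

lemma det_Dmat_of_forest (R : Finset V) (f : {x : V // x ∉ R} → V)
    (hf : ∀ i, f i ≠ (i : V))
    (hforest : ∀ i : {x : V // x ∉ R}, ∃ m, (extFun R f)^[m] (i : V) ∈ R) :
    (Dmat R f).det = 1 := by
  set h : {x : V // x ∉ R} → ℕ := fun i => Nat.find (hforest i) with hh
  have hspec : ∀ i, (extFun R f)^[h i] (i : V) ∈ R := fun i => Nat.find_spec (hforest i)
  have hpos : ∀ i, 0 < h i := by
    intro i
    rcases Nat.eq_zero_or_pos (h i) with hp | hp
    · exfalso
      have := hspec i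
      rw [hp] at this
      exact i.2 this
    · exact hp
  have hlt : ∀ (i : {x : V // x ∉ R}) (hfi : f i ∉ R), h ⟨f i, hfi⟩ < h i := by
    intro i hfi
    have h1 : (extFun R f)^[h i - 1] ((⟨f i, hfi⟩ : {x : V // x ∉ R}) : V) ∈ R := by
      have h2 := hspec i
      rw [← Nat.succ_pred_eq_of_pos (hpos i), Function.iterate_succ_apply,
        extFun_apply] at h2
      exact h2
    have h3 : h ⟨f i, hfi⟩ ≤ h i - 1 := Nat.find_le h1
    exact lt_of_le_of_lt h3 (Nat.sub_lt (hpos i) one_pos)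
  have hbt : (Dmat R f).BlockTriangular (fun i => OrderDual.toDual (h i)) := by
    intro i j hij
    have hij' : h i < h j := hij
    show (if (j : V) = (i : V) then (1 : ℂ) else 0)
        - (if (j : V) = f i then (1 : ℂ) else 0) = 0
    rw [if_neg, if_neg, sub_zero]
    · intro hji
      have hfi : f i ∉ R := hji ▸ j.2
      have hje : j = ⟨f i, hfi⟩ := Subtype.ext hji
      have := hlt i hfi
      rw [← hje] at this
      omega
    · intro hji
      have : j = i := Subtype.ext hji
      subst this
      exact lt_irrefl _ hij'
  rw [hbt.det]
  apply Finset.prod_eq_one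
  intro a _
  have : (Dmat R f).toSquareBlock (fun i => OrderDual.toDual (h i)) a = 1 := by
    ext i j
    by_cases hij : i = j
    · subst hij
      simp only [Matrix.toSquareBlock_def, Matrix.one_apply_eq]
      show (if ((i : {x : V // x ∉ R}) : V) = ((i : {x : V // x ∉ R}) : V) then (1 : ℂ) else 0)
          - (if ((i : {x : V // x ∉ R}) : V) = f i then (1 : ℂ) else 0) = 1
      rw [if_pos rfl, if_neg, sub_zero]
      exact fun hc => hf _ hc.symm
    · have hij' : (i : {x : V // x ∉ R}) ≠ (j : {x : V // x ∉ R}) := fun hc => hij (Subtype.ext hc)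
      rw [Matrix.one_apply_ne hij]
      simp only [Matrix.toSquareBlock_def]
      show (if (((j : {x : V // x ∉ R}) : V)) = (((i : {x : V // x ∉ R}) : V)) then (1 : ℂ) else 0)
          - (if (((j : {x : V // x ∉ R}) : V)) = f (i : {x : V // x ∉ R}) then (1 : ℂ) else 0) = 0
      rw [if_neg, if_neg, sub_zero]
      · intro hji
        have hfi : f (i : {x : V // x ∉ R}) ∉ R := hji ▸ (j : {x : V // x ∉ R}).2
        have hje : (j : {x : V // x ∉ R}) = ⟨f (i : {x : V // x ∉ R}), hfi⟩ := Subtype.ext hji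
        have hlt' := hlt (i : {x : V // x ∉ R}) hfi
        rw [← hje] at hlt'
        have hi2 := i.2
        have hj2 := j.2
        have : h (i : {x : V // x ∉ R}) = h (j : {x : V // x ∉ R}) := by
          have e1 : OrderDual.toDual (h (i : {x : V // x ∉ R})) = a := hi2
          have e2 : OrderDual.toDual (h (j : {x : V // x ∉ R})) = a := hj2
          have := e1.trans e2.symm
          exact OrderDual.toDual_inj.mp this
        omega
      · intro hji
        exact hij' (Subtype.ext hji).symm
  rw [this, Matrix.det_one]

lemma det_Dmat_of_not_forest (R : Finset V) (f : {x : V // x ∉ R} → V)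
    (hcyc : ∃ i : {x : V // x ∉ R}, ∀ m, (extFun R f)^[m] (i : V) ∉ R) :
    (Dmat R f).det = 0 := by
  obtain ⟨i, hi⟩ := hcyc
  set F := extFun R f with hF
  -- find a repeated iterate
  obtain ⟨a, b, hab, heq⟩ := Finite.exists_ne_map_eq_of_infinite (fun t : ℕ => F^[t] (i : V))
  wlog hab' : a < b generalizing a b
  · exact this b a hab.symm heq.symm (by omega)
  set x := F^[a] (i : V) with hx
  have hxR : ∀ t, F^[t] x ∉ R := by
    intro t
    rw [hx, ← Function.iterate_add_apply]
    exact hi (t + a)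
  have hper : F^[b - a] x = x := by
    rw [hx, ← Function.iterate_add_apply, Nat.sub_add_cancel hab'.le]
    exact heq.symm
  have hex : ∃ p, 0 < p ∧ F^[p] x = x := ⟨b - a, by omega, hper⟩
  set p := Nat.find hex with hp
  obtain ⟨hppos, hpper⟩ : 0 < p ∧ F^[p] x = x := Nat.find_spec hex
  -- distinctness of the cycle points
  have hdist : ∀ s t, s < t → t < p → F^[s] x ≠ F^[t] x := by
    intro s t hst htp hc
    have h1 : F^[p - t + s] x = x := by
      calc F^[p - t + s] x = F^[p - t] (F^[s] x) := Function.iterate_add_apply F (p - t) s x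
        _ = F^[p - t] (F^[t] x) := by rw [hc]
        _ = F^[p - t + t] x := (Function.iterate_add_apply F (p - t) t x).symm
        _ = F^[p] x := by rw [Nat.sub_add_cancel htp.le]
        _ = x := hpper
    have := Nat.find_min hex (m := p - t + s) (by omega)
    exact this ⟨by omega, h1⟩
  -- the indicator vector of the cycle
  set v := fun j : {x : V // x ∉ R} =>
    if ∃ t, t < p ∧ (j : V) = F^[t] x then (1 : ℂ) else 0 with hv
  have hv0 : v ≠ 0 := by
    intro hc
    have h1 : v ⟨x, hxR 0⟩ = 1 := by
      rw [hv]
      exact if_pos ⟨0, hppos, rfl⟩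
    rw [hc] at h1
    simp at h1
  have hvM : Matrix.vecMul v (Dmat R f) = 0 := by
    funext j
    have hstep : ∀ i, v i * Dmat R f i j
        = if ∃ t, t < p ∧ (i : V) = F^[t] x then Dmat R f i j else 0 := by
      intro i
      simp only [hv]
      by_cases hc : ∃ t, t < p ∧ (i : V) = F^[t] x
      · rw [if_pos hc, if_pos hc, one_mul]
      · rw [if_neg hc, if_neg hc, zero_mul]
    show ∑ i, v i * Dmat R f i j = 0
    rw [Finset.sum_congr rfl fun i _ => hstep i, Finset.sum_ite, Finset.sum_const_zero,
      add_zero]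
    have himg : Finset.univ.filter (fun i : {x : V // x ∉ R} => ∃ t, t < p ∧ (i : V) = F^[t] x)
        = Finset.image (fun t => (⟨F^[t] x, hxR t⟩ : {x : V // x ∉ R})) (Finset.range p) := by
      ext c
      simp only [Finset.mem_filter, Finset.mem_univ, true_and, Finset.mem_image,
        Finset.mem_range]
      constructor
      · rintro ⟨t, htp, hct⟩
        exact ⟨t, htp, Subtype.ext hct.symm⟩
      · rintro ⟨t, htp, hct⟩
        exact ⟨t, htp, congrArg Subtype.val hct.symm⟩
    rw [himg, Finset.sum_image]
    · have hterm : ∀ t ∈ Finset.range p,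
          Dmat R f ⟨F^[t] x, hxR t⟩ j
            = (if (j : V) = F^[t] x then (1 : ℂ) else 0)
              - (if (j : V) = F^[t + 1] x then (1 : ℂ) else 0) := by
        intro t _
        have hfx : f ⟨F^[t] x, hxR t⟩ = F^[t + 1] x := by
          rw [Function.iterate_succ_apply']
          exact (extFun_apply R f ⟨F^[t] x, hxR t⟩).symm
        show (if (j : V) = F^[t] x then (1 : ℂ) else 0)
            - (if (j : V) = f ⟨F^[t] x, hxR t⟩ then (1 : ℂ) else 0) = _
        rw [hfx]
      rw [Finset.sum_congr rfl hterm,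
        Finset.sum_range_sub' (fun t => if (j : V) = F^[t] x then (1 : ℂ) else 0) p]
      rw [Function.iterate_zero_apply, hpper]
      ring
    · intro s hs t ht hst
      by_contra hne
      have hne' : s ≠ t := fun hc => hne (by rw [hc])
      have hval : F^[s] x = F^[t] x := congrArg Subtype.val hst
      rcases Nat.lt_or_ge s t with h1 | h1
      · exact hdist s t h1 (Finset.mem_range.mp ht) hval
      · have : t < s := by omega
        exact hdist t s this (Finset.mem_range.mp hs) hval.symm
  exact Matrix.exists_vecMul_eq_zero_iff.mp ⟨v, hv0, hvM⟩

end Aux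

/-- **Weighted matrix-tree theorem for rooted forests.**
Let `V` be a finite vertex set and `w : V → V → ℂ` a weight function on directed
edges.  The weighted Laplacian `L` has `L i j = -w i j` for `i ≠ j` and
`L i i = ∑_{k ≠ i} w i k`.  For any subset `R ⊆ V`, the determinant of the
submatrix of `L` obtained by deleting the rows and columns indexed by `R` equals
the sum over all spanning forests rooted at `R` (functions `F` on `V \ R` with
`F i ≠ i` and such that from every `i ∉ R` some finite iterate of `F` lands in
`R`; we normalize `F` to be the identity on `R`) of the edge-weight products
`∏_{i ∈ V \ R} w i (F i)`. -/
theorem weighted_matrix_tree_theorem_for_rooted_forests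
    {V : Type*} [Fintype V] [DecidableEq V]
    (w : V → V → ℂ) (R : Finset V) (L : Matrix V V ℂ)
    (hL_offdiag : ∀ i j, i ≠ j → L i j = - w i j)
    (hL_diag : ∀ i, L i i = ∑ k ∈ Finset.univ.filter (fun k => k ≠ i), w i k) :
    (Matrix.of fun i j : {x : V // x ∉ R} => L i j).det =
      ∑ F ∈ (Finset.univ : Finset (V → V)).filter
          (fun F => (∀ i ∈ R, F i = i) ∧ (∀ i, i ∉ R → F i ≠ i) ∧
            (∀ i, i ∉ R → ∃ m : ℕ, F^[m] i ∈ R)),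
        ∏ i ∈ Rᶜ, w i (F i) := by
  set S := {x : V // x ∉ R}
  set A : S → Finset V := fun i => Finset.univ.filter (fun k => k ≠ (i : V)) with hA
  set r : S → V → (S → ℂ) := fun i k j =>
    (if (j : V) = (i : V) then (1 : ℂ) else 0) - (if (j : V) = k then (1 : ℂ) else 0) with hr
  -- Each row of the submatrix is a weighted sum of incidence rows.
  have hrow : ∀ i : S, (fun j : S => L i j) = ∑ k ∈ A i, w i k • r i k := by
    intro i
    funext j
    rw [Finset.sum_apply]
    simp only [Pi.smul_apply, smul_eq_mul, hr]
    by_cases hji : (j : V) = (i : V)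
    · have : j = i := Subtype.ext hji
      subst this
      rw [hL_diag]
      apply Finset.sum_congr rfl
      intro k hk
      have hki : k ≠ (j : V) := by
        simpa using hk
      rw [if_pos rfl, if_neg (fun hc => hki hc.symm), sub_zero, mul_one]
    · rw [hL_offdiag _ _ (fun hc => hji hc.symm)]
      have hterm : ∀ k ∈ A i,
          w i k * ((if (j : V) = (i : V) then (1 : ℂ) else 0)
            - (if (j : V) = k then (1 : ℂ) else 0))
          = -(if (j : V) = k then w i k else 0) := by
        intro k _
        rw [if_neg hji]
        split <;> ring
      rw [Finset.sum_congr rfl hterm, Finset.sum_neg_distrib, Finset.sum_ite_eq]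
      rw [if_pos]
      simp only [A, Finset.mem_filter, Finset.mem_univ, true_and]
      exact fun hc => hji (hc ▸ rfl)
  -- Multilinear expansion of the determinant.
  have hdet1 : (Matrix.of fun i j : S => L i j).det
      = ∑ g ∈ Fintype.piFinset A, (∏ i : S, w i (g i)) • (Dmat R g).det := by
    have e1 : (Matrix.of fun i j : S => L i j).det
        = Matrix.detRowAlternating (fun i : S => ∑ k ∈ A i, w i k • r i k) := by
      congr 1
      funext i
      exact hrow i
    rw [e1]
    have e2 := (Matrix.detRowAlternating (n := S) (R := ℂ)).toMultilinearMap.map_sum_finset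
      (fun i k => w i k • r i k) A
    rw [show ((Matrix.detRowAlternating (n := S) (R := ℂ)).toMultilinearMap
        (fun i : S => ∑ k ∈ A i, w i k • r i k))
      = Matrix.detRowAlternating (fun i : S => ∑ k ∈ A i, w i k • r i k) from rfl] at e2
    rw [e2]
    apply Finset.sum_congr rfl
    intro g _
    have e3 := (Matrix.detRowAlternating (n := S) (R := ℂ)).toMultilinearMap.map_smul_univ
      (fun i => w i (g i)) (fun i => r i (g i))
    exact e3
  rw [hdet1]
  -- Determinants of incidence matrices: 1 for forests, 0 otherwise.
  set P : (S → V) → Prop := fun g => ∀ i : S, ∃ m, (extFun R g)^[m] (i : V) ∈ R with hP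
  have hDval : ∀ g ∈ Fintype.piFinset A, (Dmat R g).det = if P g then 1 else 0 := by
    intro g hg
    have hgne : ∀ i : S, g i ≠ (i : V) := by
      intro i
      have := Fintype.mem_piFinset.mp hg i
      rw [hA] at this
      simpa using this
    by_cases hPg : P g
    · rw [if_pos hPg]
      exact det_Dmat_of_forest R g hgne hPg
    · rw [if_neg hPg]
      apply det_Dmat_of_not_forest R g
      by_contra hcon
      push_neg at hcon
      exact hPg (fun i => hcon i)
  have hdet2 : ∑ g ∈ Fintype.piFinset A, (∏ i : S, w i (g i)) • (Dmat R g).det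
      = ∑ g ∈ (Fintype.piFinset A).filter P, ∏ i : S, w i (g i) := by
    rw [Finset.sum_filter]
    apply Finset.sum_congr rfl
    intro g hg
    rw [hDval g hg, smul_eq_mul]
    split <;> ring
  rw [hdet2]
  -- Bijection between restricted functions and globally-defined forest maps.
  apply Finset.sum_nbij' (fun g => extFun R g) (fun F => fun i : S => F (i : V))
  · intro g hg
    simp only [Finset.mem_filter, Finset.mem_univ, true_and] at hg ⊢
    obtain ⟨hg1, hg2⟩ := hg
    have hgne : ∀ i : S, g i ≠ (i : V) := by
      intro i
      have := Fintype.mem_piFinset.mp hg1 i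
      rw [hA] at this
      simpa using this
    refine ⟨fun i hi => extFun_apply_mem R g hi, ?_, ?_⟩
    · intro i hiR
      rw [show extFun R g i = g ⟨i, hiR⟩ from extFun_apply R g ⟨i, hiR⟩]
      exact hgne ⟨i, hiR⟩
    · intro i hiR
      exact hg2 ⟨i, hiR⟩
  · intro F hF
    simp only [Finset.mem_filter, Finset.mem_univ, true_and] at hF ⊢
    obtain ⟨hF1, hF2, hF3⟩ := hF
    have hFe : extFun R (fun i : S => F (i : V)) = F := by
      funext x
      by_cases hx : x ∉ R
      · exact extFun_apply R _ ⟨x, hx⟩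
      · rw [extFun_apply_mem R _ (not_not.mp hx), hF1 x (not_not.mp hx)]
    constructor
    · rw [Fintype.mem_piFinset]
      intro i
      rw [hA]
      simp only [Finset.mem_filter, Finset.mem_univ, true_and]
      exact hF2 (i : V) i.2
    · rw [hP]
      intro i
      rw [hFe]
      exact hF3 (i : V) i.2
  · intro g hg
    funext i
    exact extFun_apply R g i
  · intro F hF
    simp only [Finset.mem_filter, Finset.mem_univ, true_and] at hF
    obtain ⟨hF1, hF2, hF3⟩ := hF
    funext x
    by_cases hx : x ∉ R
    · exact extFun_apply R _ ⟨x, hx⟩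
    · rw [extFun_apply_mem R _ (not_not.mp hx), hF1 x (not_not.mp hx)]
  · intro g hg
    rw [Finset.prod_subtype Rᶜ (fun x => Finset.mem_compl) (fun x => w x (extFun R g x))]
    apply Finset.prod_congr rfl
    intro i _
    rw [extFun_apply R g i]
end

section
/- Let Ω : E → ℝ be smooth (C³ suffices) and suppose that at every point its Hessian is a scalar multiple of η, i.e. for every x ∈ E there is f(x) ∈ ℝ with D²Ω(x)(u,v) = f(x)·η(u,v) for all u,v ∈ E. Then there exist a ∈ ℝ, a linear functional b : E → ℝ, and c ∈ ℝ such that Ω(x) = a + b(x) + c·η(x,x) for all x ∈ E. (This is the general solution Ω = a + b_μ x^μ + c x² of the flat-space conformally invariant Einstein-scale equation (∇_μ∇_ν + Φ_{μν})₀ Ω = 0.) -/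
set_option maxHeartbeats 1000000


/-- **General solution of the flat-space Einstein-scale equation.**
Let `E` be a finite-dimensional real vector space with `dim E ≥ 2` and `η` a
nondegenerate symmetric bilinear form on `E`.  If `Ω : E → ℝ` is `C³` and at
every point its Hessian is a scalar multiple of `η` (the trace-free part of the
Hessian vanishes, i.e. the flat-space conformally invariant equation
`(∇_μ∇_ν + Φ_{μν})₀ Ω = 0`), then there are `a ∈ ℝ`, a linear functional
`b : E → ℝ` and `c ∈ ℝ` with `Ω x = a + b x + c • η(x,x)`, i.e.
`Ω = a + b_μ x^μ + c x²`. -/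
theorem einstein_scale_general_solution
    {E : Type*} [NormedAddCommGroup E] [NormedSpace ℝ E]
    [FiniteDimensional ℝ E] (hdim : 2 ≤ Module.finrank ℝ E)
    (η : E →ₗ[ℝ] E →ₗ[ℝ] ℝ)
    (hsymm : ∀ u v, η u v = η v u)
    (hnondeg : ∀ u, (∀ v, η u v = 0) → u = 0)
    (Ω : E → ℝ) (hΩ : ContDiff ℝ 3 Ω)
    (hhess : ∀ x : E, ∃ f : ℝ, ∀ u v : E,
      iteratedFDeriv ℝ 2 Ω x ![u, v] = f * η u v) :
    ∃ (a : ℝ) (b : E →ₗ[ℝ] ℝ) (c : ℝ), ∀ x : E, Ω x = a + b x + c * η x x := by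
  classical
  set G : E → (E →L[ℝ] ℝ) := fderiv ℝ Ω with hGdef
  set H : E → (E →L[ℝ] E →L[ℝ] ℝ) := fderiv ℝ G with hHdef
  have hΩ2 : ContDiff ℝ 2 G := hΩ.fderiv_right (by norm_num)
  have hΩ1 : ContDiff ℝ 1 H := hΩ2.fderiv_right (by norm_num)
  have hHdiff : Differentiable ℝ H := hΩ1.differentiable (by norm_num)
  have hGdiff : Differentiable ℝ G := hΩ2.differentiable (by norm_num)
  have hΩdiff : Differentiable ℝ Ω := hΩ.differentiable (by norm_num)
  -- restate the Hessian hypothesis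
  have hhess' : ∀ x, ∃ f : ℝ, ∀ u v, H x u v = f * η u v := by
    intro x
    obtain ⟨f, hf⟩ := hhess x
    refine ⟨f, fun u v => ?_⟩
    have := hf u v
    rwa [iteratedFDeriv_two_apply] at this
  -- pick a pair with η u0 v0 ≠ 0
  have hEpos : 0 < Module.finrank ℝ E := by omega
  have : Nontrivial E := Module.nontrivial_of_finrank_pos hEpos
  obtain ⟨u0, hu0⟩ := exists_ne (0 : E)
  have : ¬ ∀ v, η u0 v = 0 := fun h => hu0 (hnondeg u0 h)
  push_neg at this
  obtain ⟨v0, hv0⟩ := this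
  set f : E → ℝ := fun x => H x u0 v0 * (η u0 v0)⁻¹ with hfdef
  have key : ∀ x u v, H x u v = f x * η u v := by
    intro x u v
    obtain ⟨g, hg⟩ := hhess' x
    have hfx : f x = g := by
      simp only [hfdef, hg u0 v0]
      field_simp
    rw [hfx, hg]
  -- f is differentiable
  have hEv : ∀ (u v : E), ∀ x : E, HasFDerivAt (fun y => H y u v)
      (((ContinuousLinearMap.apply ℝ ℝ v).comp
        (ContinuousLinearMap.apply ℝ (E →L[ℝ] ℝ) u)).comp (fderiv ℝ H x)) x := by
    intro u v x
    exact (((ContinuousLinearMap.apply ℝ ℝ v).comp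
        (ContinuousLinearMap.apply ℝ (E →L[ℝ] ℝ) u)).hasFDerivAt).comp x (f := H) (f' := fderiv ℝ H x) (hHdiff x).hasFDerivAt
  have hfdiff : Differentiable ℝ f := by
    intro x
    exact (((hEv u0 v0 x).differentiableAt).mul_const _)
  -- third derivative identity
  have hT : ∀ x w u v, fderiv ℝ H x w u v = fderiv ℝ f x w * η u v := by
    intro x w u v
    have h1 : HasFDerivAt (fun y => H y u v)
        (((ContinuousLinearMap.apply ℝ ℝ v).comp
          (ContinuousLinearMap.apply ℝ (E →L[ℝ] ℝ) u)).comp (fderiv ℝ H x)) x := hEv u v x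
    have h2 : HasFDerivAt (fun y => f y * η u v) ((η u v) • fderiv ℝ f x) x :=
      (hfdiff x).hasFDerivAt.mul_const _
    have heq : (fun y => H y u v) = fun y => f y * η u v := funext fun y => key y u v
    rw [heq] at h1
    have := h1.unique h2
    calc fderiv ℝ H x w u v
        = (((ContinuousLinearMap.apply ℝ ℝ v).comp
          (ContinuousLinearMap.apply ℝ (E →L[ℝ] ℝ) u)).comp (fderiv ℝ H x)) w := rfl
      _ = ((η u v) • fderiv ℝ f x) w := by rw [this]
      _ = fderiv ℝ f x w * η u v := by
          simp [mul_comm]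
  -- symmetry of the third derivative in the first two slots
  have hsym3 : ∀ x w u, fderiv ℝ H x w u = fderiv ℝ H x u w := by
    intro x w u
    exact (hΩ2.contDiffAt.isSymmSndFDerivAt (by norm_num)) w u
  -- the derivative of f vanishes
  have hdf0 : ∀ x, fderiv ℝ f x = 0 := by
    intro x
    by_contra hne
    obtain ⟨w0, hw0⟩ : ∃ w0, fderiv ℝ f x w0 ≠ 0 := by
      by_contra h
      push_neg at h
      exact hne (ContinuousLinearMap.ext h)
    set L : E →ₗ[ℝ] ℝ := (fderiv ℝ f x : E →L[ℝ] ℝ).toLinearMap with hLdef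
    have hker : LinearMap.ker L = ⊥ := by
      rw [LinearMap.ker_eq_bot']
      intro u hu
      apply hnondeg u
      intro v
      have e1 : fderiv ℝ f x w0 * η u v = fderiv ℝ f x u * η w0 v := by
        rw [← hT x w0 u v, ← hT x u w0 v]
        rw [hsym3 x w0 u]
      have hu' : fderiv ℝ f x u = 0 := hu
      rw [hu', zero_mul] at e1
      exact (mul_eq_zero.1 e1).resolve_left hw0
    have h1 : Module.finrank ℝ (LinearMap.range L) + Module.finrank ℝ (LinearMap.ker L)
        = Module.finrank ℝ E := LinearMap.finrank_range_add_finrank_ker L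
    rw [hker, finrank_bot] at h1
    have h2 : Module.finrank ℝ (LinearMap.range L) ≤ Module.finrank ℝ ℝ :=
      Submodule.finrank_le _
    rw [Module.finrank_self] at h2
    omega
  have hfconst : ∀ x, f x = f 0 := fun x => is_const_of_fderiv_eq_zero hfdiff hdf0 x 0
  -- hence the Hessian is constant
  have hHconst : ∀ x, H x = H 0 := by
    intro x
    ext u v
    rw [key x u v, key 0 u v, hfconst x]
  -- the gradient is affine
  have hGaff : ∀ x, G x = G 0 + H 0 x := by
    have hD : ∀ x : E, fderiv ℝ (fun y => G y - H 0 y) x = 0 := by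
      intro x
      have h1 : HasFDerivAt G (H x) x := (hGdiff x).hasFDerivAt
      have h2 : HasFDerivAt (fun y => H 0 y) (H 0) x := (H 0).hasFDerivAt
      have h3 : HasFDerivAt (fun y => G y - H 0 y) (H x - H 0) x := h1.sub h2
      simp only [hHconst x, sub_self] at h3
      exact h3.fderiv.trans (by ext u v; simp)
    have hDdiff : Differentiable ℝ (fun y => G y - H 0 y) :=
      hGdiff.sub (H 0).differentiable
    intro x
    have := is_const_of_fderiv_eq_zero hDdiff hD x 0
    simp only [map_zero, sub_zero] at this
    linear_combination (norm := module) this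
  -- integrate once more
  have hquad : ∀ x, Ω x = Ω 0 + G 0 x + (1/2) * H 0 x x := by
    have hq : ∀ x : E, HasFDerivAt (fun y : E => H 0 y y)
        (((H 0).isBoundedBilinearMap.deriv (x, x)).comp
          ((ContinuousLinearMap.id ℝ E).prod (ContinuousLinearMap.id ℝ E))) x := by
      intro x
      have hin : HasFDerivAt (fun y : E => (y, y))
          ((ContinuousLinearMap.id ℝ E).prod (ContinuousLinearMap.id ℝ E)) x :=
        (hasFDerivAt_id x).prodMk (hasFDerivAt_id x)
      have hout := (H 0).isBoundedBilinearMap.hasFDerivAt (x, x)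
      have hcomp : HasFDerivAt ((fun p : E × E => H 0 p.1 p.2) ∘ (fun y : E => (y, y)))
          (((H 0).isBoundedBilinearMap.deriv (x, x)).comp
            ((ContinuousLinearMap.id ℝ E).prod (ContinuousLinearMap.id ℝ E))) x :=
        HasFDerivAt.comp (f := fun y : E => (y, y)) x hout hin
      exact hcomp
    set φ : E → ℝ := fun y => Ω y - G 0 y - (1/2) * H 0 y y with hφdef
    have hφderiv : ∀ x : E, HasFDerivAt φ (0 : E →L[ℝ] ℝ) x := by
      intro x
      have h1 : HasFDerivAt Ω (G x) x := (hΩdiff x).hasFDerivAt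
      have h2 : HasFDerivAt (fun y : E => G 0 y) (G 0) x := (G 0).hasFDerivAt
      have h3 := HasFDerivAt.const_mul (hq x) ((1:ℝ)/2)
      have h4 : HasFDerivAt φ
          (G x - G 0 - ((1:ℝ)/2) • (((H 0).isBoundedBilinearMap.deriv (x, x)).comp
            ((ContinuousLinearMap.id ℝ E).prod (ContinuousLinearMap.id ℝ E)))) x :=
        (h1.sub h2).sub h3
      convert h4 using 1
      ext w
      have hsymH : H 0 w x = H 0 x w := by
        rw [key 0 w x, key 0 x w, hsymm w x]
      simp only [ContinuousLinearMap.zero_apply, ContinuousLinearMap.coe_sub',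
        Pi.sub_apply, ContinuousLinearMap.coe_smul', Pi.smul_apply,
        ContinuousLinearMap.coe_comp', Function.comp_apply,
        ContinuousLinearMap.prod_apply, ContinuousLinearMap.coe_id', id_eq,
        IsBoundedBilinearMap.deriv_apply, smul_eq_mul]
      rw [hGaff x, hsymH]
      simp
      ring
    intro x
    have hφdiff : Differentiable ℝ φ := fun y => (hφderiv y).differentiableAt
    have hφ0 : ∀ y, fderiv ℝ φ y = 0 := fun y => (hφderiv y).fderiv
    have := is_const_of_fderiv_eq_zero hφdiff hφ0 x 0
    simp only [hφdef, map_zero, sub_zero, mul_zero] at this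
    linarith [this]
  refine ⟨Ω 0, (G 0 : E →L[ℝ] ℝ).toLinearMap, f 0 / 2, fun x => ?_⟩
  have := hquad x
  rw [key 0 x x] at this
  simpa [div_eq_mul_inv, mul_comm, mul_assoc, mul_left_comm] using this
end

section
/- Assume momentum conservation: ∑_{j=1}^n (σ_j)_A W_j = 0 in ℂ⁴ for A = 0, 1 (equivalently ∑_j W_j ⊗ σ_j = 0). Then for every i and all α, β ∈ ℂ², ∑_{j=1}^n ℍ_{ij} (α σ_j)(β σ_j) = 0. Consequently, if the spinors σ_j represent at least three distinct points of ℂP¹, the Hodges matrix ℍ has rank at most n − 3. -/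
/-- **Kernel vectors and rank of the Hodges matrix under momentum conservation.**
With `(a b) = a₀b₁ − a₁b₀`, spinors `σ₁,…,σₙ ∈ ℂ²` representing distinct points
of `ℂP¹` (`(σ_i σ_j) ≠ 0` for `i ≠ j`, and `n ≥ 3`), a reference spinor `ξ` with
`(ξ σ_i) ≠ 0`, dual twistors `W_i ∈ ℂ⁴`, a skew 4×4 matrix `A` with
`[V,W] = ∑ A_{IJ} V_I W_J`, and the Hodges matrix
`ℍ_{ij} = −[W_i,W_j]/(σ_i σ_j)` (`i ≠ j`),
`ℍ_{ii} = −∑_{j≠i} ℍ_{ij} (ξσ_j)²/(ξσ_i)²`: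
if momentum is conserved, `∑_j (σ_j)_A W_j = 0` for `A = 0,1`, then for every
`i` and all `α, β ∈ ℂ²` one has `∑_j ℍ_{ij} (ασ_j)(βσ_j) = 0`, and consequently
`ℍ` has rank at most `n − 3`. -/
theorem hodges_matrix_kernel_and_rank
    (n : ℕ) (hn : 3 ≤ n)
    (σ : Fin n → Fin 2 → ℂ) (ξ : Fin 2 → ℂ)
    (W : Fin n → Fin 4 → ℂ)
    (A : Matrix (Fin 4) (Fin 4) ℂ) (hA : ∀ a b, A a b = - A b a)
    (br : (Fin 2 → ℂ) → (Fin 2 → ℂ) → ℂ)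
    (hbr : ∀ a b, br a b = a 0 * b 1 - a 1 * b 0)
    (tw : (Fin 4 → ℂ) → (Fin 4 → ℂ) → ℂ)
    (htw : ∀ V W', tw V W' = ∑ I : Fin 4, ∑ J : Fin 4, A I J * V I * W' J)
    (hσ : ∀ i j, i ≠ j → br (σ i) (σ j) ≠ 0)
    (hξ : ∀ i, br ξ (σ i) ≠ 0)
    (H : Matrix (Fin n) (Fin n) ℂ)
    (hHoff : ∀ i j, i ≠ j → H i j = -(tw (W i) (W j)) / br (σ i) (σ j))
    (hHdiag : ∀ i, H i i =
      -∑ j ∈ Finset.univ.filter (fun j => j ≠ i),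
        H i j * (br ξ (σ j)) ^ 2 / (br ξ (σ i)) ^ 2)
    (hmom : ∀ a : Fin 2, ∀ I : Fin 4, ∑ j, σ j a * W j I = 0) :
    (∀ i : Fin n, ∀ α β : Fin 2 → ℂ,
        ∑ j, H i j * br α (σ j) * br β (σ j) = 0) ∧
      H.rank ≤ n - 3 := by
  classical
  -- tw V V = 0
  have htww : ∀ V : Fin 4 → ℂ, tw V V = 0 := by
    intro V
    have h1 : tw V V = ∑ I : Fin 4, ∑ J : Fin 4, A I J * V I * V J := htw V V
    have h2 : (∑ I : Fin 4, ∑ J : Fin 4, A I J * V I * V J)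
        = ∑ I : Fin 4, ∑ J : Fin 4, A J I * V I * V J := by
      rw [Finset.sum_comm]
      exact Finset.sum_congr rfl fun I _ => Finset.sum_congr rfl fun J _ => by ring
    have h3 : (∑ I : Fin 4, ∑ J : Fin 4, A J I * V I * V J)
        = -(∑ I : Fin 4, ∑ J : Fin 4, A I J * V I * V J) := by
      rw [← Finset.sum_neg_distrib]
      refine Finset.sum_congr rfl fun I _ => ?_
      rw [← Finset.sum_neg_distrib]
      refine Finset.sum_congr rfl fun J _ => ?_
      rw [hA J I]; ring
    have h4 : tw V V = - tw V V := by
      nth_rewrite 1 [h1, h2, h3, ← h1]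
      rfl
    linear_combination h4 / 2
  have hbrself : ∀ a : Fin 2 → ℂ, br a a = 0 := by
    intro a; rw [hbr]; ring
  -- momentum conservation, bracketed version
  have hmom' : ∀ (c : Fin 2 → ℂ) (J : Fin 4), ∑ j, br c (σ j) * W j J = 0 := by
    intro c J
    have h0 := hmom 0 J
    have h1 := hmom 1 J
    have heq : ∑ j, br c (σ j) * W j J
        = c 0 * ∑ j, σ j 1 * W j J - c 1 * ∑ j, σ j 0 * W j J := by
      rw [Finset.mul_sum, Finset.mul_sum, ← Finset.sum_sub_distrib]
      exact Finset.sum_congr rfl fun j _ => by rw [hbr]; ring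
    rw [heq, h0, h1]; ring
  -- ∑_j tw(W i, W j) * br β (σ j) = 0
  have hsum0 : ∀ (i : Fin n) (β : Fin 2 → ℂ),
      ∑ j, tw (W i) (W j) * br β (σ j) = 0 := by
    intro i β
    have heq : ∑ j, tw (W i) (W j) * br β (σ j)
        = ∑ I : Fin 4, ∑ J : Fin 4, A I J * W i I * (∑ j, br β (σ j) * W j J) := by
      simp only [htw, Finset.sum_mul, Finset.mul_sum]
      rw [Finset.sum_comm]
      refine Finset.sum_congr rfl fun I _ => ?_
      rw [Finset.sum_comm]
      exact Finset.sum_congr rfl fun J _ => Finset.sum_congr rfl fun j _ => by ring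
    rw [heq]
    simp [hmom' β]
  -- kernel relation with α = σ i
  have hL1 : ∀ (i : Fin n) (β : Fin 2 → ℂ),
      ∑ j, H i j * br (σ i) (σ j) * br β (σ j) = 0 := by
    intro i β
    have heq : ∀ j, H i j * br (σ i) (σ j) * br β (σ j)
        = -(tw (W i) (W j) * br β (σ j)) := by
      intro j
      by_cases hji : j = i
      · subst hji
        rw [hbrself, htww]; ring
      · rw [hHoff i j (Ne.symm hji), div_mul_cancel₀ _ (hσ i j (Ne.symm hji))]
        ring
    rw [Finset.sum_congr rfl fun j _ => heq j, Finset.sum_neg_distrib, hsum0 i β, neg_zero]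
  -- kernel relation with α = β = ξ
  have hL3 : ∀ i : Fin n, ∑ j, H i j * br ξ (σ j) * br ξ (σ j) = 0 := by
    intro i
    have hd := hHdiag i
    rw [Finset.filter_ne'] at hd
    have hc : (br ξ (σ i)) ^ 2 ≠ 0 := pow_ne_zero 2 (hξ i)
    have hd2 : H i i * (br ξ (σ i)) ^ 2
        = -∑ j ∈ Finset.univ.erase i, H i j * (br ξ (σ j)) ^ 2 := by
      rw [hd, ← Finset.sum_neg_distrib, Finset.sum_mul, ← Finset.sum_neg_distrib]
      refine Finset.sum_congr rfl fun j _ => ?_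
      field_simp
      rw [mul_div_assoc, div_self (hξ i), mul_one]
    have hsplit : ∑ j, H i j * br ξ (σ j) * br ξ (σ j)
        = H i i * (br ξ (σ i)) ^ 2 + ∑ j ∈ Finset.univ.erase i, H i j * (br ξ (σ j)) ^ 2 := by
      rw [← Finset.add_sum_erase Finset.univ _ (Finset.mem_univ i)]
      congr 1
      · ring
      · exact Finset.sum_congr rfl fun j _ => by ring
    rw [hsplit, hd2]; ring
  -- decomposition of an arbitrary bracket
  have hdecomp : ∀ (i : Fin n) (γ : Fin 2 → ℂ) (j : Fin n),
      br γ (σ j) = (br ξ γ / br ξ (σ i)) * br (σ i) (σ j)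
        + (-(br (σ i) γ) / br ξ (σ i)) * br ξ (σ j) := by
    intro i γ j
    have hc := hξ i
    rw [div_mul_eq_mul_div, div_mul_eq_mul_div, ← add_div, eq_div_iff hc]
    rw [hbr, hbr, hbr, hbr, hbr, hbr]
    ring
  -- the main kernel relation
  have hker : ∀ (i : Fin n) (α β : Fin 2 → ℂ),
      ∑ j, H i j * br α (σ j) * br β (σ j) = 0 := by
    intro i α β
    have hexp : ∑ j, H i j * br α (σ j) * br β (σ j)
        = (br ξ α / br ξ (σ i)) * (br ξ β / br ξ (σ i))
            * (∑ j, H i j * br (σ i) (σ j) * br (σ i) (σ j))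
        + ((br ξ α / br ξ (σ i)) * (-(br (σ i) β) / br ξ (σ i))
            + (-(br (σ i) α) / br ξ (σ i)) * (br ξ β / br ξ (σ i)))
            * (∑ j, H i j * br (σ i) (σ j) * br ξ (σ j))
        + (-(br (σ i) α) / br ξ (σ i)) * (-(br (σ i) β) / br ξ (σ i))
            * (∑ j, H i j * br ξ (σ j) * br ξ (σ j)) := by
      simp only [Finset.mul_sum, ← Finset.sum_add_distrib]
      refine Finset.sum_congr rfl fun j _ => ?_
      rw [hdecomp i α j, hdecomp i β j]
      ring
    rw [hexp, hL1 i (σ i), hL1 i ξ, hL3 i]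
    ring
  refine ⟨hker, ?_⟩
  -- three kernel vectors
  set v : Fin 3 → (Fin n → ℂ) :=
    ![fun j => σ j 0 * σ j 0, fun j => σ j 0 * σ j 1, fun j => σ j 1 * σ j 1] with hv
  have hbre0 : ∀ j, br ![(1:ℂ), 0] (σ j) = σ j 1 := by
    intro j; rw [hbr]; norm_num
  have hbre1 : ∀ j, br ![(0:ℂ), 1] (σ j) = -σ j 0 := by
    intro j; rw [hbr]; norm_num
  have hvker : ∀ a : Fin 3, H.mulVec (v a) = 0 := by
    intro a
    funext i
    rw [Matrix.mulVec, dotProduct]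
    simp only [Pi.zero_apply]
    fin_cases a
    · rw [← hker i ![(0:ℂ),1] ![(0:ℂ),1]]
      refine Finset.sum_congr rfl fun j _ => ?_
      rw [hbre1]
      show H i j * (σ j 0 * σ j 0) = _
      ring
    · show ∑ j, H i j * (σ j 0 * σ j 1) = 0
      have h2 : ∑ j, H i j * (σ j 0 * σ j 1)
          = -∑ j, H i j * br ![(0:ℂ),1] (σ j) * br ![(1:ℂ),0] (σ j) := by
        rw [← Finset.sum_neg_distrib]
        refine Finset.sum_congr rfl fun j _ => ?_
        rw [hbre1 j, hbre0 j]
        ring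
      rw [h2, hker i ![(0:ℂ),1] ![(1:ℂ),0], neg_zero]
    · rw [← hker i ![(1:ℂ),0] ![(1:ℂ),0]]
      refine Finset.sum_congr rfl fun j _ => ?_
      rw [hbre0]
      show H i j * (σ j 1 * σ j 1) = _
      ring
  -- linear independence of the three kernel vectors
  have hli : LinearIndependent ℂ v := by
    rw [Fintype.linearIndependent_iff]
    intro g hg
    set p0 : Fin n := ⟨0, by omega⟩ with hp0
    set p1 : Fin n := ⟨1, by omega⟩ with hp1
    set p2 : Fin n := ⟨2, by omega⟩ with hp2
    have hne01 : p0 ≠ p1 := by simp [hp0, hp1, Fin.ext_iff]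
    have hne02 : p0 ≠ p2 := by simp [hp0, hp2, Fin.ext_iff]
    have hne12 : p1 ≠ p2 := by simp [hp1, hp2, Fin.ext_iff]
    set M : Matrix (Fin 3) (Fin 3) ℂ :=
      !![σ p0 0 * σ p0 0, σ p0 0 * σ p0 1, σ p0 1 * σ p0 1;
         σ p1 0 * σ p1 0, σ p1 0 * σ p1 1, σ p1 1 * σ p1 1;
         σ p2 0 * σ p2 0, σ p2 0 * σ p2 1, σ p2 1 * σ p2 1] with hM
    have hdet : M.det = br (σ p0) (σ p1) * br (σ p0) (σ p2) * br (σ p1) (σ p2) := by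
      rw [hM, Matrix.det_fin_three, hbr, hbr, hbr]
      norm_num [Matrix.cons_val_zero, Matrix.cons_val_one, Matrix.head_cons, Matrix.cons_val_two, Matrix.tail_cons, Matrix.vecHead, Matrix.vecTail]
      ring
    have hdetne : M.det ≠ 0 := by
      rw [hdet]
      exact mul_ne_zero (mul_ne_zero (hσ p0 p1 hne01) (hσ p0 p2 hne02)) (hσ p1 p2 hne12)
    have hgk : ∀ q : Fin n, g 0 * v 0 q + g 1 * v 1 q + g 2 * v 2 q = 0 := by
      intro q
      have := congrFun hg q
      simpa [Fin.sum_univ_three] using this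
    have hMg : M.mulVec g = 0 := by
      funext k
      rw [Matrix.mulVec, dotProduct, Fin.sum_univ_three]
      simp only [Pi.zero_apply]
      fin_cases k
      · have h := hgk p0
        simp [hv, hM] at h ⊢
        linear_combination h
      · have h := hgk p1
        simp [hv, hM] at h ⊢
        linear_combination h
      · have h := hgk p2
        simp [hv, hM] at h ⊢
        linear_combination h
    have hgz : M⁻¹.mulVec (M.mulVec g) = g := by
      rw [Matrix.mulVec_mulVec, Matrix.nonsing_inv_mul M hdetne.isUnit, Matrix.one_mulVec]
    rw [hMg, Matrix.mulVec_zero] at hgz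
    intro a
    rw [← hgz]
    rfl
  -- span of kernel vectors is inside the kernel of mulVecLin
  have hspan : Submodule.span ℂ (Set.range v) ≤ LinearMap.ker H.mulVecLin := by
    rw [Submodule.span_le]
    rintro x ⟨a, rfl⟩
    simp only [SetLike.mem_coe, LinearMap.mem_ker, Matrix.mulVecLin_apply]
    exact hvker a
  have h3le : 3 ≤ Module.finrank ℂ (LinearMap.ker H.mulVecLin) := by
    have hcard := finrank_span_eq_card hli
    calc (3 : ℕ) = Module.finrank ℂ (Submodule.span ℂ (Set.range v)) := by
          rw [hcard]; simp
      _ ≤ Module.finrank ℂ (LinearMap.ker H.mulVecLin) := Submodule.finrank_mono hspan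
  have hrn : H.rank + Module.finrank ℂ (LinearMap.ker H.mulVecLin) = n := by
    have hrk := LinearMap.finrank_range_add_finrank_ker H.mulVecLin
    rw [Module.finrank_pi ℂ] at hrk
    simpa [Matrix.rank] using hrk
  omega
end

section
/- Fix i and regard the diagonal Hodges entry as a function of the reference spinor, ℍ_{ii}(ξ) = ∑_{j ≠ i} [W_i, W_j](ξ σ_j)²/((σ_i σ_j)(ξ σ_i)²), defined on the open set {ξ ∈ ℂ² : (ξ σ_i) ≠ 0}. Then its holomorphic gradient in ξ is ∇_ξ ℍ_{ii}(ξ) = (2/(ξ σ_i)³) · [W_i, ∑_{j=1}^n (ξ σ_j) W_j] · (−ξ₁, ξ₀). No momentum conservation is assumed; this is the variation formula for d_ξℍ_{ii} used to prove ξ-independence of the MHV amplitude formula. -/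
/-- Auxiliary: rearranging the twistor double sum and dropping the skew diagonal term. -/
theorem hodges_sum_rearrange (n : ℕ) (σ : Fin n → Fin 2 → ℂ) (W : Fin n → Fin 4 → ℂ)
    (A : Matrix (Fin 4) (Fin 4) ℂ) (hA : ∀ a b, A a b = - A b a)
    (i : Fin n) (ξ : Fin 2 → ℂ) :
    (∑ I : Fin 4, ∑ J : Fin 4, A I J * W i I *
        (∑ j, (ξ 0 * σ j 1 - ξ 1 * σ j 0) * W j J))
      = ∑ j ∈ Finset.univ.filter (fun j => j ≠ i),
          (ξ 0 * σ j 1 - ξ 1 * σ j 0) * (∑ I : Fin 4, ∑ J : Fin 4, A I J * W i I * W j J) := by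
  classical
  have hci : (∑ I : Fin 4, ∑ J : Fin 4, A I J * W i I * W i J) = 0 := by
    have h := Finset.sum_comm (s := (Finset.univ : Finset (Fin 4)))
      (t := (Finset.univ : Finset (Fin 4))) (f := fun I J => A I J * W i I * W i J)
    have h2 : (∑ J : Fin 4, ∑ I : Fin 4, A I J * W i I * W i J)
        = -∑ I : Fin 4, ∑ J : Fin 4, A I J * W i I * W i J := by
      calc (∑ J : Fin 4, ∑ I : Fin 4, A I J * W i I * W i J)
          = ∑ J : Fin 4, ∑ I : Fin 4, -(A J I * W i J * W i I) := by
            refine Finset.sum_congr rfl fun J _ => Finset.sum_congr rfl fun I _ => ?_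
            rw [hA]; ring
        _ = -∑ J : Fin 4, ∑ I : Fin 4, A J I * W i J * W i I := by simp
    have h4 : (∑ I : Fin 4, ∑ J : Fin 4, A I J * W i I * W i J)
        + (∑ I : Fin 4, ∑ J : Fin 4, A I J * W i I * W i J) = 0 := by
      linear_combination h.trans h2
    exact add_self_eq_zero.mp h4
  have h1 : ∀ I : Fin 4, (∑ J : Fin 4, A I J * W i I * (∑ j, (ξ 0 * σ j 1 - ξ 1 * σ j 0) * W j J))
      = ∑ j, (ξ 0 * σ j 1 - ξ 1 * σ j 0) * (∑ J : Fin 4, A I J * W i I * W j J) := by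
    intro I
    calc (∑ J : Fin 4, A I J * W i I * (∑ j, (ξ 0 * σ j 1 - ξ 1 * σ j 0) * W j J))
        = ∑ J : Fin 4, ∑ j, (ξ 0 * σ j 1 - ξ 1 * σ j 0) * (A I J * W i I * W j J) := by
          refine Finset.sum_congr rfl fun J _ => ?_
          rw [Finset.mul_sum]
          exact Finset.sum_congr rfl fun j _ => by ring
      _ = ∑ j, ∑ J : Fin 4, (ξ 0 * σ j 1 - ξ 1 * σ j 0) * (A I J * W i I * W j J) :=
          Finset.sum_comm
      _ = ∑ j, (ξ 0 * σ j 1 - ξ 1 * σ j 0) * (∑ J : Fin 4, A I J * W i I * W j J) := by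
          refine Finset.sum_congr rfl fun j _ => (Finset.mul_sum _ _ _).symm
  calc (∑ I : Fin 4, ∑ J : Fin 4, A I J * W i I *
          (∑ j, (ξ 0 * σ j 1 - ξ 1 * σ j 0) * W j J))
      = ∑ I : Fin 4, ∑ j, (ξ 0 * σ j 1 - ξ 1 * σ j 0) * (∑ J : Fin 4, A I J * W i I * W j J) :=
        Finset.sum_congr rfl fun I _ => h1 I
    _ = ∑ j, ∑ I : Fin 4, (ξ 0 * σ j 1 - ξ 1 * σ j 0) * (∑ J : Fin 4, A I J * W i I * W j J) :=
        Finset.sum_comm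
    _ = ∑ j, (ξ 0 * σ j 1 - ξ 1 * σ j 0) * (∑ I : Fin 4, ∑ J : Fin 4, A I J * W i I * W j J) := by
        refine Finset.sum_congr rfl fun j _ => (Finset.mul_sum _ _ _).symm
    _ = ∑ j ∈ Finset.univ.filter (fun j => j ≠ i),
          (ξ 0 * σ j 1 - ξ 1 * σ j 0) * (∑ I : Fin 4, ∑ J : Fin 4, A I J * W i I * W j J) := by
        rw [← Finset.sum_filter_add_sum_filter_not Finset.univ (fun j => j ≠ i)]
        have hone : Finset.univ.filter (fun j : Fin n => ¬ j ≠ i) = {i} := by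
          ext x; simp
        rw [hone, Finset.sum_singleton, hci, mul_zero, add_zero]

/-- Auxiliary scalar identity (quotient-rule output vs. Schouten identity). -/
theorem hodges_key_identity (cj w d u z y m : ℂ) (hw : w ≠ 0) (hd : d ≠ 0)
    (hSch : w * y - u * z = m * d) :
    cj * (u * u) * -((d * (w * w))⁻¹ * (d * (w * z + w * z)) * (d * (w * w))⁻¹) +
      (d * (w * w))⁻¹ * (cj * (u * y + u * y)) =
    2 * (w ^ 3)⁻¹ * (u * cj) * m := by
  have hm : m = (w * y - u * z) / d := by
    rw [eq_div_iff hd, ← hSch]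
  have hdw : d * (w * w) ≠ 0 := mul_ne_zero hd (mul_ne_zero hw hw)
  have hw3 : w ^ 3 ≠ 0 := pow_ne_zero _ hw
  rw [hm, inv_eq_one_div, inv_eq_one_div]
  field_simp
  ring

set_option maxHeartbeats 1600000 in
/-- **Variation of the diagonal Hodges entry with the reference spinor.**
With `(a b) = a₀b₁ − a₁b₀`, spinors `σ₁,…,σₙ ∈ ℂ²` with `(σ_i σ_j) ≠ 0` for
`i ≠ j`, dual twistors `W_j ∈ ℂ⁴` and a skew 4×4 matrix `A` with
`[V,W] = ∑ A_{IJ} V_I W_J`, consider the diagonal Hodges entry as a function of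
the reference spinor,
`ℍ_{ii}(ξ) = ∑_{j≠i} [W_i,W_j](ξσ_j)² / ((σ_iσ_j)(ξσ_i)²)`,
on `{ξ : (ξσ_i) ≠ 0}`.  Its holomorphic gradient in `ξ` is
`∇_ξ ℍ_{ii}(ξ) = (2/(ξσ_i)³)·[W_i, ∑_j (ξσ_j) W_j]·(−ξ₁, ξ₀)`,
i.e. the derivative in direction `v` is `(2/(ξσ_i)³)[W_i,∑_j (ξσ_j)W_j]·(ξ v)`.
No momentum conservation is assumed. -/
theorem dxi_diagonal_hodges_entry
    (n : ℕ) (σ : Fin n → Fin 2 → ℂ)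
    (W : Fin n → Fin 4 → ℂ)
    (A : Matrix (Fin 4) (Fin 4) ℂ) (hA : ∀ a b, A a b = - A b a)
    (hσ : ∀ i j, i ≠ j → (σ i 0 * σ j 1 - σ i 1 * σ j 0) ≠ 0)
    (i : Fin n)
    (ξ : Fin 2 → ℂ) (hξ : ξ 0 * σ i 1 - ξ 1 * σ i 0 ≠ 0) :
    HasFDerivAt
      (fun ζ : Fin 2 → ℂ =>
        ∑ j ∈ Finset.univ.filter (fun j => j ≠ i),
          (∑ I : Fin 4, ∑ J : Fin 4, A I J * W i I * W j J) *
              (ζ 0 * σ j 1 - ζ 1 * σ j 0) ^ 2 /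
            ((σ i 0 * σ j 1 - σ i 1 * σ j 0) *
              (ζ 0 * σ i 1 - ζ 1 * σ i 0) ^ 2))
      ((2 / (ξ 0 * σ i 1 - ξ 1 * σ i 0) ^ 3 *
          (∑ I : Fin 4, ∑ J : Fin 4, A I J * W i I *
            (∑ j, (ξ 0 * σ j 1 - ξ 1 * σ j 0) * W j J))) •
        (ξ 0 • (ContinuousLinearMap.proj 1 : (Fin 2 → ℂ) →L[ℂ] ℂ)
          - ξ 1 • (ContinuousLinearMap.proj 0 : (Fin 2 → ℂ) →L[ℂ] ℂ)))
      ξ := by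
  classical
  have hS := hodges_sum_rearrange n σ W A hA i ξ
  set P : Fin n → (Fin 2 → ℂ) →L[ℂ] ℂ := fun j =>
    σ j 1 • (ContinuousLinearMap.proj 0 : (Fin 2 → ℂ) →L[ℂ] ℂ)
      - σ j 0 • (ContinuousLinearMap.proj 1 : (Fin 2 → ℂ) →L[ℂ] ℂ) with hP
  have hlin : ∀ j : Fin n,
      HasFDerivAt (fun ζ : Fin 2 → ℂ => ζ 0 * σ j 1 - ζ 1 * σ j 0) (P j) ξ := by
    intro j
    exact (((ContinuousLinearMap.proj 0 : (Fin 2 → ℂ) →L[ℂ] ℂ).hasFDerivAt).mul_const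
      (σ j 1)).sub (((ContinuousLinearMap.proj 1 : (Fin 2 → ℂ) →L[ℂ] ℂ).hasFDerivAt).mul_const
      (σ j 0))
  set c : Fin n → ℂ := fun j => ∑ I : Fin 4, ∑ J : Fin 4, A I J * W i I * W j J with hc
  set li : ℂ := ξ 0 * σ i 1 - ξ 1 * σ i 0 with hli
  set lf : Fin n → ℂ := fun j => ξ 0 * σ j 1 - ξ 1 * σ j 0 with hlf
  have hterm : ∀ j : Fin n, j ≠ i →
      HasFDerivAt (fun ζ : Fin 2 → ℂ =>
          c j * ((ζ 0 * σ j 1 - ζ 1 * σ j 0) * (ζ 0 * σ j 1 - ζ 1 * σ j 0)) *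
            ((σ i 0 * σ j 1 - σ i 1 * σ j 0) *
              ((ζ 0 * σ i 1 - ζ 1 * σ i 0) * (ζ 0 * σ i 1 - ζ 1 * σ i 0)))⁻¹)
        ((c j * (lf j * lf j)) •
            ((-(ContinuousLinearMap.mulLeftRight ℂ ℂ
                ((σ i 0 * σ j 1 - σ i 1 * σ j 0) * (li * li))⁻¹
                ((σ i 0 * σ j 1 - σ i 1 * σ j 0) * (li * li))⁻¹)).comp
              ((σ i 0 * σ j 1 - σ i 1 * σ j 0) • (li • P i + li • P i)))
          + ((σ i 0 * σ j 1 - σ i 1 * σ j 0) * (li * li))⁻¹ •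
            (c j • (lf j • P j + lf j • P j))) ξ := by
    intro j hj
    have hd : (σ i 0 * σ j 1 - σ i 1 * σ j 0) ≠ 0 := hσ i j (fun h => hj h.symm)
    have hden0 : (σ i 0 * σ j 1 - σ i 1 * σ j 0) * (li * li) ≠ 0 :=
      mul_ne_zero hd (mul_ne_zero hξ hξ)
    have hnum : HasFDerivAt (fun ζ : Fin 2 → ℂ =>
        c j * ((ζ 0 * σ j 1 - ζ 1 * σ j 0) * (ζ 0 * σ j 1 - ζ 1 * σ j 0)))
        (c j • (lf j • P j + lf j • P j)) ξ :=
      ((hlin j).mul (hlin j)).const_mul (c j)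
    have hden : HasFDerivAt (fun ζ : Fin 2 → ℂ =>
        (σ i 0 * σ j 1 - σ i 1 * σ j 0) *
          ((ζ 0 * σ i 1 - ζ 1 * σ i 0) * (ζ 0 * σ i 1 - ζ 1 * σ i 0)))
        ((σ i 0 * σ j 1 - σ i 1 * σ j 0) • (li • P i + li • P i)) ξ :=
      ((hlin i).mul (hlin i)).const_mul _
    have hinv := (hasFDerivAt_inv' (𝕜 := ℂ) hden0).comp ξ hden
    exact hnum.mul hinv
  simp only [div_eq_mul_inv, pow_two]
  refine (HasFDerivAt.fun_sum (fun j hj => hterm j (Finset.mem_filter.mp hj).2)).congr_fderiv ?_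
  ext v
  simp only [ContinuousLinearMap.sum_apply, ContinuousLinearMap.add_apply,
    ContinuousLinearMap.smul_apply, ContinuousLinearMap.comp_apply,
    ContinuousLinearMap.neg_apply, ContinuousLinearMap.mulLeftRight_apply,
    ContinuousLinearMap.sub_apply, ContinuousLinearMap.proj_apply, smul_eq_mul, hP]
  rw [hS, Finset.mul_sum, Finset.sum_mul]
  refine Finset.sum_congr rfl fun j hj => ?_
  have hj' : j ≠ i := (Finset.mem_filter.mp hj).2
  have hd : (σ i 0 * σ j 1 - σ i 1 * σ j 0) ≠ 0 := hσ i j (fun h => hj' h.symm)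
  have hli0 : li ≠ 0 := hξ
  exact hodges_key_identity (c j) li (σ i 0 * σ j 1 - σ i 1 * σ j 0) (lf j)
    (σ i 1 * v 0 - σ i 0 * v 1) (σ j 1 * v 0 - σ j 0 * v 1) (ξ 0 * v 1 - ξ 1 * v 0)
    hξ hd (by simp only [hli, hlf]; ring)
end

section
/- If momentum conservation holds, ∑_{j=1}^n (σ_j)_A W_j = 0 in ℂ⁴ for A = 0, 1, then each diagonal Hodges entry is independent of the reference spinor: for all ξ, ξ' ∈ ℂ² with (ξ σ_i) ≠ 0 and (ξ' σ_i) ≠ 0, one has ∑_{j ≠ i} [W_i,W_j](ξ σ_j)²/((σ_i σ_j)(ξ σ_i)²) = ∑_{j ≠ i} [W_i,W_j](ξ' σ_j)²/((σ_i σ_j)(ξ' σ_i)²). -/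
/-- **ξ-independence of the diagonal Hodges entries under momentum conservation.**
With `(a b) = a₀b₁ − a₁b₀`, `n ≥ 2`, spinors `σ_j ∈ ℂ²` with `(σ_i σ_j) ≠ 0`
for `i ≠ j`, dual twistors `W_j ∈ ℂ⁴`, a skew 4×4 matrix `A` with
`[V,W] = ∑ A_{IJ} V_I W_J`, and the diagonal Hodges entry
`ℍ_{ii}(ξ) = ∑_{j≠i} [W_i,W_j](ξσ_j)² / ((σ_iσ_j)(ξσ_i)²)`:
if momentum is conserved, `∑_j (σ_j)_A W_j = 0` for `A = 0,1`, then
`ℍ_{ii}(ξ) = ℍ_{ii}(ξ')` for any reference spinors `ξ, ξ'` with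
`(ξ σ_i) ≠ 0 ≠ (ξ' σ_i)`. -/
theorem diagonal_hodges_entry_xi_independent
    (n : ℕ) (hn : 2 ≤ n)
    (σ : Fin n → Fin 2 → ℂ) (W : Fin n → Fin 4 → ℂ)
    (A : Matrix (Fin 4) (Fin 4) ℂ) (hA : ∀ a b, A a b = - A b a)
    (br : (Fin 2 → ℂ) → (Fin 2 → ℂ) → ℂ)
    (hbr : ∀ a b, br a b = a 0 * b 1 - a 1 * b 0)
    (tw : (Fin 4 → ℂ) → (Fin 4 → ℂ) → ℂ)
    (htw : ∀ V W', tw V W' = ∑ I : Fin 4, ∑ J : Fin 4, A I J * V I * W' J)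
    (hσ : ∀ i j, i ≠ j → br (σ i) (σ j) ≠ 0)
    (hmom : ∀ a : Fin 2, ∀ I : Fin 4, ∑ j, σ j a * W j I = 0)
    (i : Fin n) (ξ ξ' : Fin 2 → ℂ)
    (hξ : br ξ (σ i) ≠ 0) (hξ' : br ξ' (σ i) ≠ 0) :
    ∑ j ∈ Finset.univ.filter (fun j => j ≠ i),
        tw (W i) (W j) * (br ξ (σ j)) ^ 2 /
          (br (σ i) (σ j) * (br ξ (σ i)) ^ 2) =
      ∑ j ∈ Finset.univ.filter (fun j => j ≠ i),
        tw (W i) (W j) * (br ξ' (σ j)) ^ 2 /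
          (br (σ i) (σ j) * (br ξ' (σ i)) ^ 2) := by
  -- tw (W i) (W i) = 0 by skewness of A
  have htwii : tw (W i) (W i) = 0 := by
    rw [htw]
    simp only [Fin.sum_univ_four]
    linear_combination (hA 0 1) * (W i 0 * W i 1) + (hA 0 2) * (W i 0 * W i 2) +
      (hA 0 3) * (W i 0 * W i 3) + (hA 1 2) * (W i 1 * W i 2) +
      (hA 1 3) * (W i 1 * W i 3) + (hA 2 3) * (W i 2 * W i 3) +
      (hA 0 0) * (W i 0 * W i 0 / 2) + (hA 1 1) * (W i 1 * W i 1 / 2) +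
      (hA 2 2) * (W i 2 * W i 2 / 2) + (hA 3 3) * (W i 3 * W i 3 / 2)
  -- componentwise momentum conservation contracted with any η
  have key0 : ∀ (η : Fin 2 → ℂ) (J : Fin 4), ∑ j, br η (σ j) * W j J = 0 := by
    intro η J
    have h0 := hmom 0 J
    have h1 := hmom 1 J
    calc ∑ j, br η (σ j) * W j J
        = η 0 * (∑ j, σ j 1 * W j J) - η 1 * (∑ j, σ j 0 * W j J) := by
          rw [Finset.mul_sum, Finset.mul_sum, ← Finset.sum_sub_distrib]
          exact Finset.sum_congr rfl fun j _ => by rw [hbr]; ring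
      _ = 0 := by rw [h0, h1]; ring
  -- full-sum version with tw
  have key : ∀ η : Fin 2 → ℂ, ∑ j, tw (W i) (W j) * br η (σ j) = 0 := by
    intro η
    simp_rw [htw, Finset.sum_mul]
    rw [Finset.sum_comm]
    refine Finset.sum_eq_zero fun I _ => ?_
    rw [Finset.sum_comm]
    refine Finset.sum_eq_zero fun J _ => ?_
    have h : ∑ j, A I J * W i I * W j J * br η (σ j)
        = A I J * W i I * ∑ j, br η (σ j) * W j J := by
      rw [Finset.mul_sum]
      exact Finset.sum_congr rfl fun j _ => by ring
    rw [h, key0 η J, mul_zero]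
  -- sum over j ≠ i version
  have keyT : ∀ η : Fin 2 → ℂ,
      ∑ j ∈ Finset.univ.filter (fun j => j ≠ i), tw (W i) (W j) * br η (σ j) = 0 := by
    intro η
    have hfe : Finset.univ.filter (fun j => j ≠ i) = Finset.univ.erase i :=
      Finset.filter_ne' Finset.univ i
    rw [hfe, Finset.sum_erase_eq_sub (Finset.mem_univ i), key η, htwii, zero_mul, sub_zero]
  rw [← sub_eq_zero, ← Finset.sum_sub_distrib]
  have main : ∀ j ∈ Finset.univ.filter (fun j => j ≠ i),
      tw (W i) (W j) * (br ξ (σ j)) ^ 2 / (br (σ i) (σ j) * (br ξ (σ i)) ^ 2) -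
        tw (W i) (W j) * (br ξ' (σ j)) ^ 2 / (br (σ i) (σ j) * (br ξ' (σ i)) ^ 2)
      = -(br ξ ξ') / ((br ξ (σ i)) ^ 2 * (br ξ' (σ i)) ^ 2) *
          (tw (W i) (W j) * (br ξ (σ j) * br ξ' (σ i) + br ξ' (σ j) * br ξ (σ i))) := by
    intro j hj
    have hij : j ≠ i := (Finset.mem_filter.mp hj).2
    have h1 : br (σ i) (σ j) ≠ 0 := hσ i j (Ne.symm hij)
    have hsch : br ξ (σ j) * br ξ' (σ i) - br ξ' (σ j) * br ξ (σ i)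
        = -(br ξ ξ' * br (σ i) (σ j)) := by
      simp only [hbr]; ring
    have hb : br (σ i) (σ j) * (br ξ (σ i)) ^ 2 ≠ 0 :=
      mul_ne_zero h1 (pow_ne_zero 2 hξ)
    have hd : br (σ i) (σ j) * (br ξ' (σ i)) ^ 2 ≠ 0 :=
      mul_ne_zero h1 (pow_ne_zero 2 hξ')
    have hden : (br ξ (σ i)) ^ 2 * (br ξ' (σ i)) ^ 2 ≠ 0 :=
      mul_ne_zero (pow_ne_zero 2 hξ) (pow_ne_zero 2 hξ')
    rw [div_sub_div _ _ hb hd, div_mul_eq_mul_div, div_eq_div_iff (mul_ne_zero hb hd) hden]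
    linear_combination (tw (W i) (W j) * br (σ i) (σ j) * (br ξ (σ i)) ^ 2 *
      (br ξ' (σ i)) ^ 2 * (br ξ (σ j) * br ξ' (σ i) + br ξ' (σ j) * br ξ (σ i))) * hsch
  rw [Finset.sum_congr rfl main, ← Finset.mul_sum]
  have hsplit : ∑ j ∈ Finset.univ.filter (fun j => j ≠ i),
      tw (W i) (W j) * (br ξ (σ j) * br ξ' (σ i) + br ξ' (σ j) * br ξ (σ i))
      = br ξ' (σ i) * (∑ j ∈ Finset.univ.filter (fun j => j ≠ i), tw (W i) (W j) * br ξ (σ j))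
        + br ξ (σ i) * (∑ j ∈ Finset.univ.filter (fun j => j ≠ i), tw (W i) (W j) * br ξ' (σ j)) := by
    rw [Finset.mul_sum, Finset.mul_sum, ← Finset.sum_add_distrib]
    exact Finset.sum_congr rfl fun j _ => by ring
  rw [hsplit, keyT ξ, keyT ξ', mul_zero, mul_zero, add_zero, mul_zero]
end

section
/- Each of the three fields Ψ_{ABCD}(x) = p_A p_B p_C p_D e^{i k·x}, Ψ'_{ABCD}(x) = (det x) · p_A p_B p_C p_D e^{i k·x}, and Ψ''_{ABCD}(x) = α_{(A} p_B p_C p_{D)} e^{i k·x} (round brackets denoting total symmetrization over A,B,C,D) satisfies the flat-space linearized Bach equation ∑_{C,D,E,F} ε^{CE} ε^{DF} ∂_{E A'} ∂_{F B'} Ψ_{ABCD}(x) = 0 for all A, B, A', B' and all x. Consequently any linear combination, in particular the Einstein polarization state (1 − Λ·det x) p_A p_B p_C p_D e^{i k·x}, is a solution of the linearized Bach equations. -/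
/-- Complexified Minkowski space in spinor coordinates: points are
`x = (x^{AA'})` with `A, A' ∈ Fin 2`. -/
abbrev SpinorSpacetime : Type := Fin 2 → Fin 2 → ℂ

/-- The partial derivative `∂_{AA'} f` of a function `f` on complexified
Minkowski space, in the coordinate direction `x^{AA'}`. -/
noncomputable def spinorPDeriv (A A' : Fin 2) (f : SpinorSpacetime → ℂ) :
    SpinorSpacetime → ℂ :=
  fun x => fderiv ℂ f x (Pi.single A (Pi.single A' 1))

/-- The Levi–Civita symbol on `Fin 2`: `ε^{01} = 1 = −ε^{10}`, `ε^{00} = ε^{11} = 0`. -/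
def levicivita2 : Fin 2 → Fin 2 → ℂ := fun a b =>
  if a = 0 ∧ b = 1 then 1 else if a = 1 ∧ b = 0 then -1 else 0

/-- The flat-space linearized Bach equation for a field `Ψ_{ABCD}(x)`:
`∑_{C,D,E,F} ε^{CE} ε^{DF} ∂_{EA'} ∂_{FB'} Ψ_{ABCD}(x) = 0` for all
`A, B, A', B'` and all `x`. -/
def SatisfiesLinearizedBach
    (Ψ : SpinorSpacetime → Fin 2 → Fin 2 → Fin 2 → Fin 2 → ℂ) : Prop :=
  ∀ (A B A' B' : Fin 2) (x : SpinorSpacetime),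
    ∑ C : Fin 2, ∑ D : Fin 2, ∑ E : Fin 2, ∑ F : Fin 2,
      levicivita2 C E * levicivita2 D F *
        spinorPDeriv E A' (spinorPDeriv F B' (fun y => Ψ y A B C D)) x = 0

/-- The plane-wave factor `e^{i k·x}` for the null momentum `k_{AA'} = p_A p̃_{A'}`. -/
noncomputable def planeWave (p pt : Fin 2 → ℂ) (x : SpinorSpacetime) : ℂ :=
  Complex.exp (Complex.I * ∑ a : Fin 2, ∑ b : Fin 2, p a * pt b * x a b)

open ContinuousLinearMap

noncomputable def coordCLM (a b : Fin 2) : SpinorSpacetime →L[ℂ] ℂ :=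
  (proj b : (Fin 2 → ℂ) →L[ℂ] ℂ).comp (proj a : SpinorSpacetime →L[ℂ] (Fin 2 → ℂ))

lemma hasFDerivAt_coord (a b : Fin 2) (x : SpinorSpacetime) :
    HasFDerivAt (fun x : SpinorSpacetime => x a b) (coordCLM a b) x :=
  ContinuousLinearMap.hasFDerivAt (coordCLM a b)

lemma coordCLM_single (a b E A' : Fin 2) :
    coordCLM a b (Pi.single E (Pi.single A' 1)) = if E = a ∧ A' = b then 1 else 0 := by
  fin_cases E <;> fin_cases A' <;> fin_cases a <;> fin_cases b <;>
    simp [coordCLM, Pi.single_apply]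

noncomputable def kCLM (p pt : Fin 2 → ℂ) : SpinorSpacetime →L[ℂ] ℂ :=
  ∑ a : Fin 2, ∑ b : Fin 2, (p a * pt b) • coordCLM a b

lemma hasFDerivAt_planeWave (p pt : Fin 2 → ℂ) (x : SpinorSpacetime) :
    HasFDerivAt (planeWave p pt) (planeWave p pt x • Complex.I • kCLM p pt) x := by
  have hsum : HasFDerivAt (fun x : SpinorSpacetime => ∑ a : Fin 2, ∑ b : Fin 2, p a * pt b * x a b)
      (kCLM p pt) x :=
    HasFDerivAt.fun_sum fun a _ => HasFDerivAt.fun_sum fun b _ => (hasFDerivAt_coord a b x).const_mul _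
  exact (hsum.const_mul Complex.I).cexp

lemma kCLM_single (p pt : Fin 2 → ℂ) (E A' : Fin 2) :
    kCLM p pt (Pi.single E (Pi.single A' 1)) = p E * pt A' := by
  simp [kCLM, coordCLM_single]
  fin_cases E <;> fin_cases A' <;> simp [Fin.sum_univ_two]

noncomputable def qpw (p pt : Fin 2 → ℂ) (c0 c1 c2 c3 c4 c5 : ℂ) : SpinorSpacetime → ℂ :=
  fun x => (c0 + c1 * x 0 0 + c2 * x 0 1 + c3 * x 1 0 + c4 * x 1 1 +
            c5 * (x 0 0 * x 1 1 - x 0 1 * x 1 0)) * planeWave p pt x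

lemma spinorPDeriv_qpw (p pt : Fin 2 → ℂ) (c0 c1 c2 c3 c4 c5 : ℂ) (E A' : Fin 2) :
    spinorPDeriv E A' (qpw p pt c0 c1 c2 c3 c4 c5)
      = qpw p pt
          (Complex.I * p E * pt A' * c0 +
            (if E = 0 ∧ A' = 0 then c1 else if E = 0 ∧ A' = 1 then c2
              else if E = 1 ∧ A' = 0 then c3 else c4))
          (Complex.I * p E * pt A' * c1 + if E = 1 ∧ A' = 1 then c5 else 0)
          (Complex.I * p E * pt A' * c2 + if E = 1 ∧ A' = 0 then -c5 else 0)
          (Complex.I * p E * pt A' * c3 + if E = 0 ∧ A' = 1 then -c5 else 0)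
          (Complex.I * p E * pt A' * c4 + if E = 0 ∧ A' = 0 then c5 else 0)
          (Complex.I * p E * pt A' * c5) := by
  funext x
  have h00 := hasFDerivAt_coord 0 0 x
  have h01 := hasFDerivAt_coord 0 1 x
  have h10 := hasFDerivAt_coord 1 0 x
  have h11 := hasFDerivAt_coord 1 1 x
  have hf := (((((((hasFDerivAt_const c0 x).add (h00.const_mul c1)).add
      (h01.const_mul c2)).add (h10.const_mul c3)).add (h11.const_mul c4)).add
      (((h00.mul h11).sub (h01.mul h10)).const_mul c5)).mul (hasFDerivAt_planeWave p pt x))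
  show fderiv ℂ (qpw p pt c0 c1 c2 c3 c4 c5) x (Pi.single E (Pi.single A' 1)) = _
  rw [show fderiv ℂ (qpw p pt c0 c1 c2 c3 c4 c5) x = _ from hf.fderiv]
  fin_cases E <;> fin_cases A' <;>
    simp [coordCLM_single, kCLM_single, qpw] <;> ring

lemma perm_succ_sum {n : ℕ} (F : Equiv.Perm (Fin (n+1)) → ℂ) :
    ∑ π : Equiv.Perm (Fin (n+1)), F π =
      ∑ a : Fin (n+1), ∑ σ : Equiv.Perm (Fin n), F (Equiv.Perm.decomposeFin.symm (a, σ)) := by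
  rw [← Equiv.sum_comp (Equiv.Perm.decomposeFin.symm) F, Fintype.sum_prod_type]

lemma perm_sum_expand (g h : Fin 2 → ℂ) (v : Fin 4 → Fin 2) :
    ∑ π : Equiv.Perm (Fin 4),
        g (v (π 0)) * h (v (π 1)) * h (v (π 2)) * h (v (π 3)) =
      6 * (g (v 0) * h (v 1) * h (v 2) * h (v 3) + g (v 1) * h (v 0) * h (v 2) * h (v 3) +
        g (v 2) * h (v 0) * h (v 1) * h (v 3) + g (v 3) * h (v 0) * h (v 1) * h (v 2)) := by
  rw [perm_succ_sum]
  simp only [perm_succ_sum]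
  simp only [show (1 : Fin 4) = Fin.succ 0 from rfl, show (2 : Fin 4) = Fin.succ 1 from rfl,
    show (3 : Fin 4) = Fin.succ 2 from rfl, show (1 : Fin 3) = Fin.succ 0 from rfl,
    show (2 : Fin 3) = Fin.succ 1 from rfl, show (1 : Fin 2) = Fin.succ 0 from rfl,
    Equiv.Perm.decomposeFin_symm_apply_zero, Equiv.Perm.decomposeFin_symm_apply_succ]
  simp only [Fin.sum_univ_succ, Fin.sum_univ_zero, Finset.univ_unique, Finset.sum_singleton]
  simp [Equiv.swap_apply_def, Fin.ext_iff]
  ring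

lemma bach_master (p pt : Fin 2 → ℂ) (c0 c5 : Fin 2 → Fin 2 → ℂ) (t : ℂ)
    (hc5 : ∀ C D, c5 C D = t * p C * p D)
    (h01 : c0 0 1 = c0 1 0)
    (h0 : p 1 * p 1 * c0 0 0 - 2 * p 0 * p 1 * c0 0 1 + p 0 * p 0 * c0 1 1 = 0) :
    ∀ (A' B' : Fin 2) (x : SpinorSpacetime),
      ∑ C : Fin 2, ∑ D : Fin 2, ∑ E : Fin 2, ∑ F : Fin 2,
        levicivita2 C E * levicivita2 D F *
          spinorPDeriv E A' (spinorPDeriv F B' (qpw p pt (c0 C D) 0 0 0 0 (c5 C D))) x = 0 := by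
  intro A' B' x
  simp only [hc5, spinorPDeriv_qpw, Fin.sum_univ_two, levicivita2]
  fin_cases A' <;> fin_cases B' <;> simp [qpw]
  · linear_combination ((Complex.I ^ 2 * pt 0 * pt 0) * planeWave p pt x) * h0 +
      ((Complex.I ^ 2 * p 0 * p 1 * pt 0 * pt 0) * planeWave p pt x) * h01
  · linear_combination ((Complex.I ^ 2 * pt 0 * pt 1) * planeWave p pt x) * h0 +
      ((Complex.I ^ 2 * p 0 * p 1 * pt 0 * pt 1) * planeWave p pt x) * h01
  · linear_combination ((Complex.I ^ 2 * pt 1 * pt 0) * planeWave p pt x) * h0 +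
      ((Complex.I ^ 2 * p 0 * p 1 * pt 1 * pt 0) * planeWave p pt x) * h01
  · linear_combination ((Complex.I ^ 2 * pt 1 * pt 1) * planeWave p pt x) * h0 +
      ((Complex.I ^ 2 * p 0 * p 1 * pt 1 * pt 1) * planeWave p pt x) * h01

/-- **Polarization states of conformal gravity solve the linearized Bach equation.**
For spinors `p, α, p̃ ∈ ℂ²` and `k_{AA'} = p_A p̃_{A'}`, each of the fields
`Ψ_{ABCD} = p_A p_B p_C p_D e^{ik·x}`,
`Ψ'_{ABCD} = (det x) p_A p_B p_C p_D e^{ik·x}` (with `x² = det x`), and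
`Ψ''_{ABCD} = α_{(A} p_B p_C p_{D)} e^{ik·x}` (total symmetrization over
`A,B,C,D`) satisfies the flat-space linearized Bach equation, and consequently
so does the Einstein polarization state
`(1 − Λ · det x) p_A p_B p_C p_D e^{ik·x}` for any `Λ`. -/
theorem polarization_states_satisfy_bach (p pt αs : Fin 2 → ℂ) (Λ : ℂ) :
    SatisfiesLinearizedBach
        (fun x A B C D => p A * p B * p C * p D * planeWave p pt x) ∧
      SatisfiesLinearizedBach
        (fun x A B C D => (x 0 0 * x 1 1 - x 0 1 * x 1 0) *
          (p A * p B * p C * p D) * planeWave p pt x) ∧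
      SatisfiesLinearizedBach
        (fun x A B C D =>
          ((24 : ℂ)⁻¹ * ∑ π : Equiv.Perm (Fin 4),
            αs (![A, B, C, D] (π 0)) * p (![A, B, C, D] (π 1)) *
              p (![A, B, C, D] (π 2)) * p (![A, B, C, D] (π 3))) *
            planeWave p pt x) ∧
      SatisfiesLinearizedBach
        (fun x A B C D => (1 - Λ * (x 0 0 * x 1 1 - x 0 1 * x 1 0)) *
          (p A * p B * p C * p D) * planeWave p pt x) := by
  refine ⟨?_, ?_, ?_, ?_⟩ <;> intro A B A' B' x
  · have key : ∀ C D : Fin 2, (fun y : SpinorSpacetime =>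
        p A * p B * p C * p D * planeWave p pt y)
        = qpw p pt (p A * p B * p C * p D) 0 0 0 0 0 := by
      intro C D; funext y; simp only [qpw]; ring
    simp only [key]
    exact bach_master p pt (fun C D => p A * p B * p C * p D) (fun _ _ => 0) 0
      (fun C D => by ring) (by ring) (by ring) A' B' x
  · have key : ∀ C D : Fin 2, (fun y : SpinorSpacetime =>
        (y 0 0 * y 1 1 - y 0 1 * y 1 0) * (p A * p B * p C * p D) * planeWave p pt y)
        = qpw p pt 0 0 0 0 0 (p A * p B * p C * p D) := by
      intro C D; funext y; simp only [qpw]; ring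
    simp only [key]
    exact bach_master p pt (fun _ _ => 0) (fun C D => p A * p B * p C * p D) (p A * p B)
      (fun C D => by ring) (by ring) (by ring) A' B' x
  · have key : ∀ C D : Fin 2, (fun y : SpinorSpacetime =>
        ((24 : ℂ)⁻¹ * ∑ π : Equiv.Perm (Fin 4),
          αs (![A, B, C, D] (π 0)) * p (![A, B, C, D] (π 1)) *
            p (![A, B, C, D] (π 2)) * p (![A, B, C, D] (π 3))) * planeWave p pt y)
        = qpw p pt ((4 : ℂ)⁻¹ * (αs A * p B * p C * p D + αs B * p A * p C * p D +
            αs C * p A * p B * p D + αs D * p A * p B * p C)) 0 0 0 0 0 := by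
      intro C D; funext y
      rw [perm_sum_expand αs p ![A, B, C, D]]
      simp only [qpw, Matrix.cons_val_zero, Matrix.cons_val_one, Matrix.head_cons,
        Matrix.cons_val_two, Matrix.tail_cons, Matrix.cons_val_three]
      ring
    simp only [key]
    exact bach_master p pt (fun C D => (4 : ℂ)⁻¹ * (αs A * p B * p C * p D +
        αs B * p A * p C * p D + αs C * p A * p B * p D + αs D * p A * p B * p C))
      (fun _ _ => 0) 0 (fun C D => by ring) (by ring) (by ring) A' B' x
  · have key : ∀ C D : Fin 2, (fun y : SpinorSpacetime =>
        (1 - Λ * (y 0 0 * y 1 1 - y 0 1 * y 1 0)) * (p A * p B * p C * p D) * planeWave p pt y)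
        = qpw p pt (p A * p B * p C * p D) 0 0 0 0 (-Λ * (p A * p B * p C * p D)) := by
      intro C D; funext y; simp only [qpw]; ring
    simp only [key]
    exact bach_master p pt (fun C D => p A * p B * p C * p D)
      (fun C D => -Λ * (p A * p B * p C * p D)) (-Λ * (p A * p B))
      (fun C D => by ring) (by ring) (by ring) A' B' x
end

section
/- Let n ≥ 3 and let M be a symmetric n×n complex matrix, and let v¹, v², v³ ∈ ℂⁿ be linearly independent vectors with M v^k = 0 for k = 1, 2, 3. For a 3-element subset S ⊆ {1,…,n}, let |M^S_S| denote the determinant of the matrix obtained from M by deleting the rows and columns indexed by S, and let V_S be the 3×3 matrix whose (k, s) entry is v^k_s for s ∈ S. Then for any two 3-element subsets S and T: |M^S_S| · (det V_T)² = |M^T_T| · (det V_S)². (This invariance of the reduced determinant, applied to the Hodges matrix ℍ — which has three independent kernel vectors on the support of momentum conservation — is what makes all the thrice-reduced determinant terms in the flat-space limit equivalent and yields Hodges' MHV formula.) -/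
open Matrix

/-- Diagonal entry of the adjugate is the principal minor. -/
lemma adjugate_diag_eq {ι : Type*} [Fintype ι] [DecidableEq ι]
    (A : Matrix ι ι ℂ) (a : ι) :
    A.adjugate a a =
      (A.submatrix (Subtype.val : {x : ι // x ≠ a} → ι) Subtype.val).det := by
  classical
  rw [Matrix.adjugate_apply]
  set B := A.updateRow a (Pi.single a 1) with hB
  obtain ⟨e, he1, he2⟩ :
      ∃ e : {x : ι // x ≠ a} ⊕ {x : ι // ¬ x ≠ a} ≃ ι,
        (∀ x, e (Sum.inl x) = x.val) ∧ (∀ x, e (Sum.inr x) = x.val) :=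
    ⟨Equiv.sumCompl _, fun _ => rfl, fun _ => rfl⟩
  haveI : Unique {x : ι // ¬ x ≠ a} :=
    ⟨⟨⟨a, by simp⟩⟩, by rintro ⟨x, hx⟩; simp only [ne_eq, not_not] at hx; subst hx; rfl⟩
  have hdet : B.det = (B.submatrix e e).det := (Matrix.det_submatrix_equiv_self e B).symm
  rw [hdet]
  have hblock : B.submatrix e e =
      Matrix.fromBlocks (A.submatrix (Subtype.val : {x : ι // x ≠ a} → ι) Subtype.val)
        (Matrix.of fun (i : {x : ι // x ≠ a}) (_ : {x : ι // ¬ x ≠ a}) => B i.val a)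
        0 1 := by
    ext i j
    cases i with
    | inl i =>
      cases j with
      | inl j =>
        simp [he1, he2, hB, Matrix.updateRow_ne i.property]
      | inr j =>
        have : j.val = a := not_not.mp j.property
        simp [he1, he2, hB, this, Matrix.updateRow_ne i.property]
    | inr i =>
      have hi : i.val = a := not_not.mp i.property
      cases j with
      | inl j =>
        simp [he1, he2, hB, hi, Matrix.updateRow_self, Pi.single_apply,
          (by simpa [hi] using j.property : ¬ (j.val = a)), Ne.symm j.property]
      | inr j =>
        have hj : j.val = a := not_not.mp j.property
        simp [he1, he2, hB, hi, hj, Matrix.updateRow_self, Pi.single_apply,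
          Matrix.one_apply, Subtype.ext_iff]
  rw [hblock, Matrix.det_fromBlocks_zero₂₁, Matrix.det_one, mul_one]

lemma rank_updateColumn_le {ι : Type*} [Fintype ι] [DecidableEq ι]
    (C : Matrix ι ι ℂ) (j : ι) (b : ι → ℂ) :
    (C.updateCol j b).rank ≤ C.rank + 1 := by
  classical
  have hrange : LinearMap.range (C.updateCol j b).mulVecLin ≤
      LinearMap.range C.mulVecLin ⊔ Submodule.span ℂ {b} := by
    rintro y ⟨x, rfl⟩
    have hdec : (C.updateCol j b).mulVec x =
        C.mulVec x + x j • (b - C.mulVec (Pi.single j 1)) := by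
      funext i
      have hcol : C.mulVec (Pi.single j 1) i = C i j := by
        simp [Matrix.mulVec, dotProduct, Pi.single_apply]
      simp only [Matrix.mulVec, dotProduct, Pi.add_apply, Pi.smul_apply, Pi.sub_apply,
        smul_eq_mul]
      calc ∑ k, (C.updateCol j b) i k * x k
          = ∑ k, (C i k * x k + (if k = j then (b i - C i j) * x j else 0)) := by
            apply Finset.sum_congr rfl; intro k _
            by_cases hk : k = j
            · subst hk; simp [Matrix.updateCol_apply]; ring
            · simp [Matrix.updateCol_apply, hk]
        _ = (∑ k, C i k * x k) + (b i - C i j) * x j := by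
            rw [Finset.sum_add_distrib, Finset.sum_ite_eq' Finset.univ j]; simp
        _ = (∑ k, C i k * x k) + x j * (b i - Matrix.mulVec C (Pi.single j 1) i) := by
            rw [hcol]; ring
    rw [Matrix.mulVecLin_apply, hdec]
    refine Submodule.add_mem _ (Submodule.mem_sup_left ⟨x, rfl⟩) ?_
    refine Submodule.smul_mem _ _ (Submodule.sub_mem _
      (Submodule.mem_sup_right (Submodule.mem_span_singleton_self b))
      (Submodule.mem_sup_left ⟨Pi.single j 1, rfl⟩))
  have h1 : (C.updateCol j b).rank ≤
      Module.finrank ℂ ↥(LinearMap.range C.mulVecLin ⊔ Submodule.span ℂ {b}) :=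
    Submodule.finrank_mono hrange
  refine h1.trans ?_
  have h2 := Submodule.finrank_sup_add_finrank_inf_eq
    (LinearMap.range C.mulVecLin) (Submodule.span ℂ {b})
  have h3 : Module.finrank ℂ ↥(Submodule.span ℂ ({b} : Set (ι → ℂ))) ≤ 1 := by
    by_cases hb : b = 0
    · rw [hb, Submodule.span_zero_singleton]; simp
    · rw [finrank_span_singleton hb]
  have hd : C.rank = Module.finrank ℂ ↥(LinearMap.range C.mulVecLin) := rfl
  omega

/-- Corank-one structure of the adjugate of a symmetric matrix with a
nonzero kernel vector. -/
lemma adjugate_eq_smul_of_kernel {ι : Type*} [Fintype ι] [DecidableEq ι]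
    (K : Matrix ι ι ℂ) (hsym : Kᵀ = K) (w : ι → ℂ) (hw : K.mulVec w = 0)
    (hw0 : w ≠ 0) :
    ∃ lam : ℂ, ∀ i j, K.adjugate i j = lam * w i * w j := by
  classical
  by_cases hadj : K.adjugate = 0
  · exact ⟨0, fun i j => by simp [hadj]⟩
  · -- det K = 0
    have hdet : K.det = 0 := Matrix.exists_mulVec_eq_zero_iff.mp ⟨w, hw0, hw⟩
    -- columns of adjugate are in the kernel
    have hcol : ∀ j, K.mulVec (fun i => K.adjugate i j) = 0 := by
      intro j
      funext i
      have : (K * K.adjugate) i j = 0 := by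
        rw [Matrix.mul_adjugate, hdet]; simp
      simpa [Matrix.mul_apply, Matrix.mulVec, dotProduct] using this
    -- rank of K is at least card ι - 1
    obtain ⟨i0, j0, hij0⟩ : ∃ i j, K.adjugate i j ≠ 0 := by
      by_contra h
      push_neg at h
      exact hadj (by ext i j; simp [h i j])
    have hBdet : (K.updateRow j0 (Pi.single i0 1)).det ≠ 0 := by
      rwa [← Matrix.adjugate_apply]
    have hrankB : (K.updateRow j0 (Pi.single i0 1)).rank = Fintype.card ι :=
      Matrix.rank_of_isUnit _ ((Matrix.isUnit_iff_isUnit_det _).mpr (isUnit_iff_ne_zero.mpr hBdet))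
    have hrankK : Fintype.card ι ≤ K.rank + 1 := by
      have h1 : (K.updateRow j0 (Pi.single i0 1)).rank =
          (Kᵀ.updateCol j0 (Pi.single i0 1)).rank := by
        rw [← Matrix.rank_transpose (Kᵀ.updateCol j0 (Pi.single i0 1)),
          ← Matrix.updateRow_transpose, Matrix.transpose_transpose]
      have h2 := rank_updateColumn_le Kᵀ j0 (Pi.single i0 1)
      rw [Matrix.rank_transpose] at h2
      omega
    -- the kernel has dimension 1
    have hker : LinearMap.ker K.mulVecLin = Submodule.span ℂ {w} := by
      have hle : Submodule.span ℂ {w} ≤ LinearMap.ker K.mulVecLin := by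
        rw [Submodule.span_singleton_le_iff_mem]
        exact hw
      have hrn := LinearMap.finrank_range_add_finrank_ker K.mulVecLin
      have hfr : Module.finrank ℂ (ι → ℂ) = Fintype.card ι := Module.finrank_pi ℂ
      have hrk : K.rank = Module.finrank ℂ ↥(LinearMap.range K.mulVecLin) := rfl
      have hsw : Module.finrank ℂ ↥(Submodule.span ℂ ({w} : Set (ι → ℂ))) = 1 :=
        finrank_span_singleton hw0
      have hkerle : Module.finrank ℂ ↥(LinearMap.ker K.mulVecLin) ≤ 1 := by
        have hKrank_lt : K.rank ≤ Fintype.card ι := Matrix.rank_le_card_width K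
        omega
      exact (Submodule.eq_of_le_of_finrank_le hle (by omega)).symm
    -- each column is a multiple of w
    have hmul : ∀ j, ∃ c : ℂ, (fun i => K.adjugate i j) = c • w := by
      intro j
      have : (fun i => K.adjugate i j) ∈ Submodule.span ℂ {w} := by
        rw [← hker]
        exact hcol j
      obtain ⟨c, hc⟩ := Submodule.mem_span_singleton.mp this
      exact ⟨c, hc.symm⟩
    choose mu hmu using hmul
    obtain ⟨i0', hi0'⟩ : ∃ i, w i ≠ 0 := Function.ne_iff.mp hw0
    refine ⟨mu i0' / w i0', fun i j => ?_⟩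
    have hsymadj : K.adjugate i j = K.adjugate j i := by
      have := Matrix.adjugate_transpose K
      rw [hsym] at this
      have := congrFun (congrFun this j) i
      simpa [Matrix.transpose_apply] using this
    have e1 : K.adjugate i j = mu j * w i := by
      have := congrFun (hmu j) i; simpa using this
    have e2 : K.adjugate i0' j = mu j * w i0' := by
      have := congrFun (hmu j) i0'; simpa using this
    have e3 : K.adjugate j i0' = mu i0' * w j := by
      have := congrFun (hmu i0') j; simpa using this
    have e4 : K.adjugate i0' j = K.adjugate j i0' := by
      have := Matrix.adjugate_transpose K
      rw [hsym] at this
      have := congrFun (congrFun this j) i0'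
      simpa [Matrix.transpose_apply] using this
    have hmuj : mu j = mu i0' * w j / w i0' := by
      field_simp
      rw [← e2, e4, e3]
    rw [e1, hmuj]
    field_simp

lemma det_updateColumn_sum'' {ι κ : Type*} [Fintype ι] [DecidableEq ι]
    (A : Matrix ι ι ℂ) (j : ι) (s : Finset κ) (g : κ → ι → ℂ) :
    (A.updateCol j (fun i => ∑ x ∈ s, g x i)).det
      = ∑ x ∈ s, (A.updateCol j (g x)).det := by
  classical
  induction s using Finset.induction with
  | empty =>
    simp only [Finset.sum_empty]
    exact Matrix.det_eq_zero_of_column_eq_zero j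
      (fun i => by simp [Matrix.updateCol_apply])
  | insert _ _ hx ih =>
    rename_i x s'
    have : (fun i => ∑ y ∈ insert x s', g y i)
        = (g x + fun i => ∑ y ∈ s', g y i) := by
      funext i; simp [Finset.sum_insert hx]
    rw [this, Matrix.det_updateCol_add, ih, Finset.sum_insert hx]

lemma mulVec_u_eq_zero {n : ℕ} (M : Matrix (Fin n) (Fin n) ℂ)
    (v : Fin 3 → Fin n → ℂ) (hker : ∀ k, M.mulVec (v k) = 0) (r1 r2 : Fin n) :
    M.mulVec (fun x => (Matrix.of fun k l : Fin 3 => v k (![r1, r2, x] l)).det) = 0 := by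
  classical
  funext i
  have key : ∀ x : Fin n, (Matrix.of fun k l : Fin 3 => v k (![r1, r2, x] l))
      = (Matrix.of fun k l : Fin 3 => v k (![r1, r2, r1] l)).updateCol 2
          (fun k => v k x) := by
    intro x
    ext k l
    fin_cases l <;> simp [Matrix.updateCol_apply]
  show (∑ x : Fin n, M i x * (Matrix.of fun k l : Fin 3 => v k (![r1, r2, x] l)).det) = 0
  have step1 : ∀ x : Fin n,
      M i x * (Matrix.of fun k l : Fin 3 => v k (![r1, r2, x] l)).det
        = ((Matrix.of fun k l : Fin 3 => v k (![r1, r2, r1] l)).updateCol 2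
            (fun k => M i x * v k x)).det := by
    intro x
    rw [key x]
    rw [show (fun k => M i x * v k x) = (M i x • fun k => v k x) from rfl,
      Matrix.det_updateCol_smul]
  rw [Finset.sum_congr rfl (fun x _ => step1 x),
    ← det_updateColumn_sum'' _ 2 Finset.univ (fun x (k : Fin 3) => M i x * v k x)]
  have hcol : (fun k : Fin 3 => ∑ x : Fin n, M i x * v k x) = 0 := by
    funext k
    have := congrFun (hker k) i
    simpa [Matrix.mulVec, dotProduct] using this
  rw [hcol]
  exact Matrix.det_eq_zero_of_column_eq_zero 2
    (fun k => by simp [Matrix.updateCol_apply])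

lemma submatrix_kernel {n : ℕ} (M : Matrix (Fin n) (Fin n) ℂ) (S : Finset (Fin n))
    (uu : Fin n → ℂ) (hu : M.mulVec uu = 0) (hS0 : ∀ x ∈ S, uu x = 0) :
    (M.submatrix (Subtype.val : {x : Fin n // x ∉ S} → Fin n) Subtype.val).mulVec
      (fun j : {x : Fin n // x ∉ S} => uu j.val) = 0 := by
  classical
  funext i
  show (∑ j : {x : Fin n // x ∉ S}, M i.val j.val * uu j.val) = 0
  have h1 : (∑ j : {x : Fin n // x ∉ S}, M i.val j.val * uu j.val)
      = ∑ j ∈ Sᶜ, M i.val j * uu j := by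
    rw [Finset.sum_subtype Sᶜ (fun x => Finset.mem_compl) (fun j => M i.val j * uu j)]
  have h2 : (∑ j ∈ S, M i.val j * uu j) = 0 :=
    Finset.sum_eq_zero (fun x hx => by rw [hS0 x hx, mul_zero])
  have h3 := Finset.sum_add_sum_compl S (fun j => M i.val j * uu j)
  have h4 : (∑ j : Fin n, M i.val j * uu j) = 0 := by
    have := congrFun hu i.val
    simpa [Matrix.mulVec, dotProduct] using this
  rw [h1]
  rw [h2] at h3
  rw [zero_add] at h3
  rw [h3, h4]

lemma det_sq_eq {n : ℕ} (v : Fin 3 → Fin n → ℂ) (S : Finset (Fin n)) (hS : S.card = 3)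
    (e : Fin 3 ≃ {x : Fin n // x ∈ S}) (g : Fin 3 → Fin n)
    (hginj : Function.Injective g) (hgmem : ∀ l, g l ∈ S) :
    ((Matrix.of fun k l : Fin 3 => v k (g l)).det) ^ 2
      = ((Matrix.of fun k l : Fin 3 => v k ((e l : Fin n))).det) ^ 2 := by
  classical
  have hcard : Fintype.card {x : Fin n // x ∈ S} = 3 := by
    simp [Fintype.card_coe, hS]
  set gs : Fin 3 → {x : Fin n // x ∈ S} := fun l => ⟨g l, hgmem l⟩ with hgs
  have hgsinj : Function.Injective gs := fun a b h => hginj (congrArg Subtype.val h)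
  have hbij : Function.Bijective gs :=
    (Fintype.bijective_iff_injective_and_card gs).mpr ⟨hgsinj, by simp [hcard]⟩
  set σ : Equiv.Perm (Fin 3) := (Equiv.ofBijective gs hbij).trans e.symm with hσ
  have hgl : ∀ l, g l = ((e (σ l) : {x : Fin n // x ∈ S}) : Fin n) := by
    intro l
    have : e (σ l) = gs l := by simp [hσ]
    rw [this]
  have hmat : (Matrix.of fun k l : Fin 3 => v k (g l))
      = (Matrix.of fun k l : Fin 3 => v k ((e l : Fin n))).submatrix id σ := by
    ext k l
    simp [hgl l]
  rw [hmat, Matrix.det_permute']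
  rcases Int.units_eq_one_or (Equiv.Perm.sign σ) with h | h <;> simp [h]

lemma minor_vanish {n : ℕ} (M : Matrix (Fin n) (Fin n) ℂ)
    (v : Fin 3 → Fin n → ℂ) (hv : LinearIndependent ℂ v)
    (hker : ∀ k, M.mulVec (v k) = 0)
    (S : Finset (Fin n)) (e : Fin 3 ≃ {x : Fin n // x ∈ S})
    (hdet : (Matrix.of fun k l : Fin 3 => v k ((e l : Fin n))).det = 0) :
    (M.submatrix (Subtype.val : {x : Fin n // x ∉ S} → Fin n) Subtype.val).det = 0 := by
  classical
  obtain ⟨c, hc0, hc⟩ := Matrix.exists_vecMul_eq_zero_iff.mpr hdet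
  set uu : Fin n → ℂ := fun x => ∑ k, c k * v k x with huu
  have huS : ∀ x ∈ S, uu x = 0 := by
    intro x hx
    have : uu ((e (e.symm ⟨x, hx⟩) : {x : Fin n // x ∈ S}) : Fin n) = 0 := by
      have := congrFun hc (e.symm ⟨x, hx⟩)
      simpa [Matrix.vecMul, dotProduct, huu] using this
    simpa using this
  have huu0 : uu ≠ 0 := by
    intro h
    apply hc0
    have : ∀ k, c k = 0 := by
      apply Fintype.linearIndependent_iff.mp hv
      funext x
      have := congrFun h x
      simpa [huu] using this
    funext k; exact this k
  have hMu : M.mulVec uu = 0 := by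
    funext i
    show (∑ x, M i x * uu x) = 0
    have hexp : ∀ x, M i x * uu x = ∑ k, c k * (M i x * v k x) := by
      intro x; rw [huu]
      rw [Finset.mul_sum]; apply Finset.sum_congr rfl; intro k _; ring
    rw [Finset.sum_congr rfl (fun x _ => hexp x), Finset.sum_comm]
    apply Finset.sum_eq_zero
    intro k _
    have h0 : (∑ x, M i x * v k x) = 0 := by
      have := congrFun (hker k) i
      simpa [Matrix.mulVec, dotProduct] using this
    rw [← Finset.mul_sum, h0, mul_zero]
  have hw : (fun j : {x : Fin n // x ∉ S} => uu j.val) ≠ 0 := by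
    intro h
    apply huu0
    funext x
    by_cases hx : x ∈ S
    · exact huS x hx
    · exact congrFun h ⟨x, hx⟩
  have hker' := submatrix_kernel M S uu hMu huS
  exact Matrix.exists_mulVec_eq_zero_iff.mp ⟨_, hw, hker'⟩

lemma one_step {n : ℕ} (M : Matrix (Fin n) (Fin n) ℂ) (hM : M.IsSymm)
    (v : Fin 3 → Fin n → ℂ) (hker : ∀ k, M.mulVec (v k) = 0)
    (r1 r2 a b : Fin n) (hr : r1 ≠ r2) (ha1 : a ≠ r1) (ha2 : a ≠ r2)
    (hb1 : b ≠ r1) (hb2 : b ≠ r2) :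
    (M.submatrix
        (Subtype.val : {x : Fin n // x ∉ (insert a {r1, r2} : Finset (Fin n))} → Fin n)
        Subtype.val).det
        * ((Matrix.of fun k l : Fin 3 => v k (![r1, r2, b] l)).det) ^ 2
      = (M.submatrix
          (Subtype.val : {x : Fin n // x ∉ (insert b {r1, r2} : Finset (Fin n))} → Fin n)
          Subtype.val).det
        * ((Matrix.of fun k l : Fin 3 => v k (![r1, r2, a] l)).det) ^ 2 := by
  classical
  set R : Finset (Fin n) := {r1, r2} with hR
  set u : Fin n → ℂ := fun x => (Matrix.of fun k l : Fin 3 => v k (![r1, r2, x] l)).det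
    with hu
  have hu_a : (Matrix.of fun k l : Fin 3 => v k (![r1, r2, a] l)).det = u a := rfl
  have hu_b : (Matrix.of fun k l : Fin 3 => v k (![r1, r2, b] l)).det = u b := rfl
  have hur1 : u r1 = 0 :=
    Matrix.det_zero_of_column_eq (show (0 : Fin 3) ≠ 2 by decide) (fun k => by simp [hu])
  have hur2 : u r2 = 0 :=
    Matrix.det_zero_of_column_eq (show (1 : Fin 3) ≠ 2 by decide) (fun k => by simp [hu])
  have hMu : M.mulVec u = 0 := mulVec_u_eq_zero M v hker r1 r2
  have haR : a ∉ R := by simp [hR, ha1, ha2]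
  have hbR : b ∉ R := by simp [hR, hb1, hb2]
  have hRz : ∀ x ∈ R, u x = 0 := by
    intro x hx
    rcases Finset.mem_insert.mp hx with h | h
    · subst h; exact hur1
    · have : x = r2 := Finset.mem_singleton.mp h
      subst this; exact hur2
  set K := M.submatrix (Subtype.val : {x : Fin n // x ∉ R} → Fin n) Subtype.val with hK
  have hKsym : Kᵀ = K := by
    ext i j
    simp [hK, Matrix.transpose_apply, hM.apply]
  set w : {x : Fin n // x ∉ R} → ℂ := fun j => u j.val with hw
  have hKw : K.mulVec w = 0 := submatrix_kernel M R u hMu hRz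
  have hdiag : ∀ (c : Fin n) (hc : c ∉ R),
      K.adjugate ⟨c, hc⟩ ⟨c, hc⟩
        = (M.submatrix
            (Subtype.val : {x : Fin n // x ∉ (insert c R : Finset (Fin n))} → Fin n)
            Subtype.val).det := by
    intro c hc
    rw [adjugate_diag_eq]
    have memiff : ∀ x : Fin n, x ∉ insert c R ↔ (x ∉ R ∧ x ≠ c) := by
      intro x; simp only [Finset.mem_insert]; tauto
    set gg : {y : {x : Fin n // x ∉ R} // y ≠ ⟨c, hc⟩} ≃ {x : Fin n // x ∉ insert c R} :=
      { toFun := fun y => ⟨y.val.val,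
          (memiff _).mpr ⟨y.val.property, fun h => y.property (Subtype.ext h)⟩⟩
        invFun := fun x => ⟨⟨x.val, ((memiff _).mp x.property).1,⟩,
          fun h => ((memiff _).mp x.property).2 (congrArg Subtype.val h)⟩
        left_inv := fun y => by ext; rfl
        right_inv := fun x => rfl } with hgg
    have hmm : K.submatrix
          (Subtype.val : {y // y ≠ (⟨c, hc⟩ : {x : Fin n // x ∉ R})} → {x : Fin n // x ∉ R})
          Subtype.val
        = (M.submatrix
            (Subtype.val : {x : Fin n // x ∉ (insert c R : Finset (Fin n))} → Fin n)
            Subtype.val).submatrix gg gg := by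
      ext y z; rfl
    rw [hmm, Matrix.det_submatrix_equiv_self]
  by_cases hw0 : w = 0
  · have hua : u a = 0 := congrFun hw0 ⟨a, haR⟩
    have hub : u b = 0 := congrFun hw0 ⟨b, hbR⟩
    rw [hu_a, hu_b, hua, hub]
    simp
  · obtain ⟨lam, hlam⟩ := adjugate_eq_smul_of_kernel K hKsym w hKw hw0
    have hXa := (hdiag a haR).symm.trans (hlam ⟨a, haR⟩ ⟨a, haR⟩)
    have hXb := (hdiag b hbR).symm.trans (hlam ⟨b, hbR⟩ ⟨b, hbR⟩)
    rw [hu_a, hu_b, hXa, hXb]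
    show (lam * u a * u a) * (u b) ^ 2 = (lam * u b * u b) * (u a) ^ 2
    ring

lemma cols_li_iff {n : ℕ} (v : Fin 3 → Fin n → ℂ) (g : Fin 3 → Fin n) :
    LinearIndependent ℂ (fun l : Fin 3 => (fun k => v k (g l))) ↔
      (Matrix.of fun k l : Fin 3 => v k (g l)).det ≠ 0 := by
  constructor
  · intro h hdet
    obtain ⟨c, hc0, hc⟩ := Matrix.exists_mulVec_eq_zero_iff.mpr hdet
    have hz : ∀ l, c l = 0 := by
      apply Fintype.linearIndependent_iff.mp h
      funext k
      have h1 := congrFun hc k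
      simp only [Matrix.mulVec, dotProduct, Matrix.of_apply, Pi.zero_apply] at h1
      simp only [Finset.sum_apply, Pi.smul_apply, smul_eq_mul, Pi.zero_apply]
      rw [← h1]
      apply Finset.sum_congr rfl
      intro l _
      ring
    exact hc0 (funext hz)
  · intro hdet
    rw [Fintype.linearIndependent_iff]
    intro c hc
    by_contra hcon
    push_neg at hcon
    obtain ⟨l, hl⟩ := hcon
    apply hdet
    apply Matrix.exists_mulVec_eq_zero_iff.mp
    refine ⟨c, fun h => hl (congrFun h l), ?_⟩
    funext k
    have h1 := congrFun hc k
    simp only [Finset.sum_apply, Pi.smul_apply, smul_eq_mul, Pi.zero_apply] at h1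
    simp only [Matrix.mulVec, dotProduct, Matrix.of_apply, Pi.zero_apply]
    rw [← h1]
    apply Finset.sum_congr rfl
    intro m _
    ring

lemma enum_of_tuple {n : ℕ} (S : Finset (Fin n)) (hS : S.card = 3) (g : Fin 3 → Fin n)
    (hginj : Function.Injective g) (hg : ∀ l, g l ∈ S) :
    ∃ e : Fin 3 ≃ {x : Fin n // x ∈ S}, ∀ l, (e l : Fin n) = g l := by
  have hcard : Fintype.card {x : Fin n // x ∈ S} = 3 := by
    simp [Fintype.card_coe, hS]
  have hbij : Function.Bijective (fun l : Fin 3 => (⟨g l, hg l⟩ : {x : Fin n // x ∈ S})) :=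
    (Fintype.bijective_iff_injective_and_card _).mpr
      ⟨fun a b h => hginj (congrArg Subtype.val h), by simp [hcard]⟩
  exact ⟨Equiv.ofBijective _ hbij, fun l => rfl⟩

lemma inj3 {n : ℕ} (x y z : Fin n) (h1 : x ≠ y) (h2 : z ≠ x) (h3 : z ≠ y) :
    Function.Injective ![x, y, z] := by
  intro i j hij
  fin_cases i <;> fin_cases j <;> simp_all

lemma inj2_of_ne {α : Type*} (x y : α) (h : x ≠ y) : Function.Injective ![x, y] := by
  intro i j hij
  fin_cases i <;> fin_cases j <;> simp_all

/-- **Invariance of the thrice-reduced determinant.**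
Let `n ≥ 3`, let `M` be a symmetric `n×n` complex matrix, and let
`v¹, v², v³ ∈ ℂⁿ` be linearly independent vectors with `M vᵏ = 0`.  For a
3-element subset `S` of indices, `|M^S_S|` denotes the determinant of the
matrix obtained from `M` by deleting the rows and columns indexed by `S`, and
`V_S` is the 3×3 matrix whose `(k,s)` entry is `vᵏ_s` for `s ∈ S` (indexed via
an arbitrary enumeration of `S`).  Then for any two 3-element subsets `S, T`:
`|M^S_S| · (det V_T)² = |M^T_T| · (det V_S)²`. -/
theorem reduced_determinant_invariance
    (n : ℕ) (hn : 3 ≤ n)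
    (M : Matrix (Fin n) (Fin n) ℂ) (hM : M.IsSymm)
    (v : Fin 3 → Fin n → ℂ) (hv : LinearIndependent ℂ v)
    (hker : ∀ k : Fin 3, M.mulVec (v k) = 0)
    (S T : Finset (Fin n)) (hS : S.card = 3) (hT : T.card = 3)
    (e : Fin 3 ≃ {x : Fin n // x ∈ S}) (f : Fin 3 ≃ {x : Fin n // x ∈ T}) :
    (M.submatrix (Subtype.val : {x : Fin n // x ∉ S} → Fin n) Subtype.val).det *
        (Matrix.det (Matrix.of fun k l : Fin 3 => v k (f l : Fin n))) ^ 2 =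
      (M.submatrix (Subtype.val : {x : Fin n // x ∉ T} → Fin n) Subtype.val).det *
        (Matrix.det (Matrix.of fun k l : Fin 3 => v k (e l : Fin n))) ^ 2 := by
  classical
  have key : ∀ d : ℕ, ∀ S T : Finset (Fin n), S.card = 3 → T.card = 3 →
      ∀ (e : Fin 3 ≃ {x : Fin n // x ∈ S}) (f : Fin 3 ≃ {x : Fin n // x ∈ T}),
      (Matrix.of fun k l : Fin 3 => v k ((e l : Fin n))).det ≠ 0 →
      (Matrix.of fun k l : Fin 3 => v k ((f l : Fin n))).det ≠ 0 →
      (S \ T).card = d →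
      (M.submatrix (Subtype.val : {x : Fin n // x ∉ S} → Fin n) Subtype.val).det *
          ((Matrix.of fun k l : Fin 3 => v k ((f l : Fin n))).det) ^ 2 =
        (M.submatrix (Subtype.val : {x : Fin n // x ∉ T} → Fin n) Subtype.val).det *
          ((Matrix.of fun k l : Fin 3 => v k ((e l : Fin n))).det) ^ 2 := by
    intro d
    induction d with
    | zero =>
      intro S T hS hT e f he hf hd
      have hST : S = T := by
        have hsub : S ⊆ T := by
          rw [← Finset.sdiff_eq_empty_iff_subset]
          exact Finset.card_eq_zero.mp hd
        exact Finset.eq_of_subset_of_card_le hsub (le_of_eq (hT.trans hS.symm))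
      subst hST
      have hsq := det_sq_eq v S hS e (fun l => ((f l : Fin n)))
        (fun l m h => f.injective (Subtype.ext h)) (fun l => (f l).property)
      rw [hsq]
    | succ d ih =>
      intro S T hS hT e f he hf hd
      have hne : (S \ T).Nonempty := by
        rw [← Finset.card_pos, hd]; omega
      obtain ⟨a, haST⟩ := hne
      have haS : a ∈ S := (Finset.mem_sdiff.mp haST).1
      have haT : a ∉ T := (Finset.mem_sdiff.mp haST).2
      have herase2 : (S.erase a).card = 2 := by
        rw [Finset.card_erase_of_mem haS, hS]
      obtain ⟨r1, r2, hr12, herase⟩ := Finset.card_eq_two.mp herase2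
      have hanotin : a ∉ S.erase a := Finset.notMem_erase a S
      have ha1 : a ≠ r1 := fun h => hanotin (by rw [herase]; simp [h])
      have ha2 : a ≠ r2 := fun h => hanotin (by rw [herase]; simp [h])
      have hSeq : S = insert a ({r1, r2} : Finset (Fin n)) := by
        rw [← herase, Finset.insert_erase haS]
      have hr1S : r1 ∈ S := by rw [hSeq]; simp
      have hr2S : r2 ∈ S := by rw [hSeq]; simp
      have hTli : LinearIndependent ℂ (fun l : Fin 3 => (fun k => v k ((f l : Fin n)))) :=
        (cols_li_iff v (fun l => ((f l : Fin n)))).mpr hf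
      have hSli : LinearIndependent ℂ (fun l : Fin 3 => (fun k => v k ((e l : Fin n)))) :=
        (cols_li_iff v (fun l => ((e l : Fin n)))).mpr he
      -- the pair of columns at r1, r2 is independent
      set p : Fin 2 → Fin 3 := ![e.symm ⟨r1, hr1S⟩, e.symm ⟨r2, hr2S⟩] with hp
      have hpinj : Function.Injective p := by
        rw [hp]
        exact inj2_of_ne _ _
          (fun hq => hr12 (congrArg Subtype.val (e.symm.injective hq)))
      have hpair : LinearIndependent ℂ
          ((fun l : Fin 3 => (fun k => v k ((e l : Fin n)))) ∘ p) := hSli.comp p hpinj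
      have hpair' : LinearIndependent ℂ (fun i : Fin 2 => (fun k => v k (![r1, r2] i))) := by
        have hfun : (fun i : Fin 2 => (fun k => v k (![r1, r2] i)))
            = (fun l : Fin 3 => (fun k => v k ((e l : Fin n)))) ∘ p := by
          funext i
          fin_cases i <;> simp [hp]
        rw [hfun]
        exact hpair
      -- find the exchange element b in T
      obtain ⟨l0, hl0⟩ : ∃ l0 : Fin 3, (fun k => v k ((f l0 : Fin n))) ∉
          Submodule.span ℂ (Set.range (fun i : Fin 2 => (fun k => v k (![r1, r2] i)))) := by
        by_contra hcon
        push_neg at hcon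
        have hle : Submodule.span ℂ
              (Set.range (fun l : Fin 3 => (fun k => v k ((f l : Fin n)))))
            ≤ Submodule.span ℂ
              (Set.range (fun i : Fin 2 => (fun k => v k (![r1, r2] i)))) := by
          rw [Submodule.span_le]
          rintro _ ⟨l, rfl⟩
          exact hcon l
        have h3 := finrank_span_eq_card hTli
        have h2' := finrank_range_le_card (R := ℂ) (fun i : Fin 2 => (fun k => v k (![r1, r2] i)))
        rw [Set.finrank] at h2'
        have hm := Submodule.finrank_mono hle
        simp only [Fintype.card_fin] at h3 h2'
        omega
      set b : Fin n := (f l0 : Fin n) with hbdef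
      have hbT : b ∈ T := (f l0).property
      have hb1 : b ≠ r1 := by
        intro h
        apply hl0
        apply Submodule.subset_span
        exact ⟨0, by funext k; simp [h]⟩
      have hb2 : b ≠ r2 := by
        intro h
        apply hl0
        apply Submodule.subset_span
        exact ⟨1, by funext k; simp [h]⟩
      have hba : b ≠ a := fun h => haT (h ▸ hbT)
      set S' : Finset (Fin n) := insert b {r1, r2} with hS'
      have hS'card : S'.card = 3 := by
        rw [hS', Finset.card_insert_of_notMem (by simp [hb1, hb2]),
          Finset.card_insert_of_notMem (by simp [hr12]), Finset.card_singleton]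
      have htriple : LinearIndependent ℂ (fun i : Fin 3 => (fun k => v k (![r1, r2, b] i))) := by
        have hsnoc : (fun i : Fin 3 => (fun k => v k (![r1, r2, b] i)))
            = Fin.snoc (fun i : Fin 2 => (fun k => v k (![r1, r2] i))) (fun k => v k b) := by
          funext i
          fin_cases i <;> simp [Fin.snoc] <;> rfl
        rw [hsnoc, linearIndependent_fin_snoc]
        exact ⟨hpair', hl0⟩
      have hmem' : ∀ l : Fin 3, ![r1, r2, b] l ∈ S' := by
        intro l
        fin_cases l <;> simp [hS']
      obtain ⟨e', he'⟩ := enum_of_tuple S' hS'card ![r1, r2, b]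
        (inj3 r1 r2 b hr12 hb1 hb2) hmem'
      have he'det : (Matrix.of fun k l : Fin 3 => v k ((e' l : Fin n))).det
          = (Matrix.of fun k l : Fin 3 => v k (![r1, r2, b] l)).det := by
        congr 1
        ext k l
        simp [he' l]
      have hdS' : (Matrix.of fun k l : Fin 3 => v k ((e' l : Fin n))).det ≠ 0 := by
        rw [he'det]
        exact (cols_li_iff v ![r1, r2, b]).mp htriple
      have hstep := one_step M hM v hker r1 r2 a b hr12 ha1 ha2 hb1 hb2
      rw [← hSeq, ← hS'] at hstep
      -- squares conversions
      have hmemS : ∀ l : Fin 3, ![r1, r2, a] l ∈ S := by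
        intro l
        fin_cases l <;> simp [hSeq]
      have hsqa := det_sq_eq v S hS e ![r1, r2, a] (inj3 r1 r2 a hr12 ha1 ha2) hmemS
      -- induction hypothesis for S', T
      have hCd : (S' \ T).card = d := by
        have hsd : S' \ T = (S \ T).erase a := by
          ext x
          simp only [hS', hSeq, Finset.mem_sdiff, Finset.mem_erase, Finset.mem_insert,
            Finset.mem_singleton]
          constructor
          · rintro ⟨hx1, hx2⟩
            rcases hx1 with h | h | h
            · exact absurd (h ▸ hbT) hx2
            · exact ⟨by rintro rfl; exact ha1 h, Or.inr (Or.inl h), hx2⟩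
            · exact ⟨by rintro rfl; exact ha2 h, Or.inr (Or.inr h), hx2⟩
          · rintro ⟨hxa, hx1, hx2⟩
            rcases hx1 with h | h | h
            · exact absurd h hxa
            · exact ⟨Or.inr (Or.inl h), hx2⟩
            · exact ⟨Or.inr (Or.inr h), hx2⟩
        rw [hsd, Finset.card_erase_of_mem (Finset.mem_sdiff.mpr ⟨haS, haT⟩), hd]
        omega
      have hih := ih S' T hS'card hT e' f hdS' hf hCd
      -- final algebra
      rw [he'det] at hih hdS'
      set X1 := (M.submatrix (Subtype.val : {x : Fin n // x ∉ S} → Fin n) Subtype.val).det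
      set X2 := (M.submatrix (Subtype.val : {x : Fin n // x ∉ S'} → Fin n) Subtype.val).det
      set X3 := (M.submatrix (Subtype.val : {x : Fin n // x ∉ T} → Fin n) Subtype.val).det
      set dA := (Matrix.of fun k l : Fin 3 => v k (![r1, r2, a] l)).det
      set dB := (Matrix.of fun k l : Fin 3 => v k (![r1, r2, b] l)).det
      set dE := (Matrix.of fun k l : Fin 3 => v k ((e l : Fin n))).det
      set dF := (Matrix.of fun k l : Fin 3 => v k ((f l : Fin n))).det
      -- hstep : X1 * dB^2 = X2 * dA^2 ; hih : X2 * dF^2 = X3 * dB^2 ; hsqa : dA^2 = dE^2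
      have hcalc : X1 * dF ^ 2 * dB ^ 2 = X3 * dE ^ 2 * dB ^ 2 := by
        calc X1 * dF ^ 2 * dB ^ 2 = (X1 * dB ^ 2) * dF ^ 2 := by ring
          _ = (X2 * dA ^ 2) * dF ^ 2 := by rw [hstep]
          _ = (X2 * dF ^ 2) * dA ^ 2 := by ring
          _ = (X3 * dB ^ 2) * dA ^ 2 := by rw [hih]
          _ = (X3 * dA ^ 2) * dB ^ 2 := by ring
          _ = X3 * dE ^ 2 * dB ^ 2 := by rw [hsqa]
      exact mul_right_cancel₀ (pow_ne_zero 2 hdS') hcalc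
  by_cases he0 : (Matrix.of fun k l : Fin 3 => v k ((e l : Fin n))).det = 0
  · by_cases hf0 : (Matrix.of fun k l : Fin 3 => v k ((f l : Fin n))).det = 0
    · rw [he0, hf0]
      simp
    · rw [he0, minor_vanish M v hv hker S e he0]
      simp
  · by_cases hf0 : (Matrix.of fun k l : Fin 3 => v k ((f l : Fin n))).det = 0
    · rw [hf0, minor_vanish M v hv hker T f hf0]
      simp
    · exact key (S \ T).card S T hS hT e f he0 hf0 rfl
end
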